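/- arXiv:2006.12916 — 4 statements merged into one kernel-verified Lean document; each statement's English description precedes it below -/
import Mathlib

section
/- If a rooted graph (X,E) is (m,k)-departing, then for every positive integer ℓ it is (m,ℓk)-departing; that is, for all x,y ∈ X with |x|=|y|, if d_h(x,y) > ℓk then d_h(u,v) > 2ℓk for all u ∈ J_m(x) and v ∈ J_m(y). -/
open SimpleGraph Metric
open scoped ENNReal ENat

noncomputable section

/-- A locally finite connected graph with a distinguished root. -/
structure RootedGraph (X : Type*) where
  G : SimpleGraph X
  root : X
  conn : G.Connected
  locFin : ∀ x : X, {y | G.Adj x y}.Finite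

namespace RootedGraph

variable {X : Type*} (R : RootedGraph X)

/-- The level `|x| = d(ϑ,x)` of a vertex. -/
def level (x : X) : ℕ := R.G.dist R.root x

/-- The horizontal subgraph: edges joining vertices of equal level. -/
def Gh : SimpleGraph X where
  Adj x y := R.G.Adj x y ∧ R.level x = R.level y
  symm := ⟨fun _ _ h => ⟨h.1.symm, h.2.symm⟩⟩
  loopless := ⟨fun x h => R.G.loopless.irrefl x h.1⟩

/-- The horizontal distance `d_h`, valued in `ℕ∞`. -/
def dh (x y : X) : ℕ∞ := R.Gh.edist x y

/-- The `m`-th descendant set `J_m(x)`: vertices `y` with `|y| = |x| + m` lying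
below `x` (i.e. `x` lies on a geodesic from the root to `y`). -/
def J (m : ℕ) (x : X) : Set X :=
  {y | R.level y = R.level x + m ∧ R.G.dist x y = m}

/-- `(m,k)`-departing property. -/
def Departing (m k : ℕ) : Prop :=
  ∀ x y : X, R.level x = R.level y → (k : ℕ∞) < R.dh x y →
    ∀ u ∈ R.J m x, ∀ v ∈ R.J m y, ((2 * k : ℕ) : ℕ∞) < R.dh u v

/-- Expansive property. -/
def Expansive : Prop :=
  ∀ x y : X, R.level x = R.level y → (1 : ℕ∞) < R.dh x y →
    ∀ u ∈ R.J 1 x, ∀ v ∈ R.J 1 y, (1 : ℕ∞) < R.dh u v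

/-- The Gromov product `(x|y)` with base point the root. -/
def gp (x y : X) : ℝ := ((R.level x : ℝ) + R.level y - R.G.dist x y) / 2

/-- Gromov hyperbolicity with respect to the root base point. -/
def Hyperbolic : Prop :=
  ∃ δ : ℝ, 0 ≤ δ ∧ ∀ x y z : X, min (R.gp x z) (R.gp z y) - δ ≤ R.gp x y

/-- A geodesic ray from the root. -/
def IsRay (f : ℕ → X) : Prop := f 0 = R.root ∧ ∀ i, f (i + 1) ∈ R.J 1 (f i)

/-- The Gromov product of two rays: the (increasing) limit of `(x_i|y_i)`. -/
def gpRay (f g : ℕ → X) : ℝ≥0∞ := ⨆ i, ENNReal.ofReal (R.gp (f i) (g i))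

/-- `|x ∨ y|_k = sup{ i : d_h(x_i,y_i) ≤ k }`. -/
def joinK (k : ℕ) (f g : ℕ → X) : ℝ≥0∞ :=
  ⨆ (i : ℕ) (_ : R.dh (f i) (g i) ≤ (k : ℕ∞)), (i : ℝ≥0∞)

/-- The Gromov product on a model `B` of the hyperbolic boundary, defined as the
supremum over pairs of converging rays. -/
def gpB {B : Type*} (lim : (ℕ → X) → B) (ξ η : B) : ℝ≥0∞ :=
  ⨆ (f : ℕ → X) (g : ℕ → X)
    (_ : R.IsRay f ∧ R.IsRay g ∧ lim f = ξ ∧ lim g = η), R.gpRay f g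

/-- `B` together with `lim` is a model of the hyperbolic boundary: every point is the
limit of a ray, and two rays have the same limit iff they are equivalent. -/
def BoundaryOf {B : Type*} (lim : (ℕ → X) → B) : Prop :=
  (∀ ξ : B, ∃ f, R.IsRay f ∧ lim f = ξ) ∧
    ∀ f g, R.IsRay f → R.IsRay g → (lim f = lim g ↔ R.gpRay f g = ⊤)

/-- The metric on the boundary model is a Gromov metric:
`θ_a(ξ,η) ≍ e^{-a(ξ|η)}`. -/
def GromovLike {B : Type*} [MetricSpace B] (lim : (ℕ → X) → B) (a c₁ c₂ : ℝ) : Prop :=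
  ∀ ξ η : B, ξ ≠ η →
    c₁ * Real.exp (-a * (R.gpB lim ξ η).toReal) ≤ dist ξ η ∧
      dist ξ η ≤ c₂ * Real.exp (-a * (R.gpB lim ξ η).toReal)

/-- The boundary cell `J_∂(x)`: boundary points reachable by rays through `x`. -/
def cell {B : Type*} (lim : (ℕ → X) → B) (x : X) : Set B :=
  {ξ | ∃ f, R.IsRay f ∧ f (R.level x) = x ∧ lim f = ξ}

/-- The `k`-shadow `J^k_∂(x)`. -/
def shadow {B : Type*} (lim : (ℕ → X) → B) (k : ℕ) (x : X) : Set B :=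
  ⋃ y ∈ {y | R.level y = R.level x ∧ R.dh x y ≤ (k : ℕ∞)}, R.cell lim y

/-- Bounded degree. -/
def BddDeg : Prop := ∃ D : ℕ, ∀ x : X, Set.ncard {y | R.G.Adj x y} ≤ D

/-- A vertical rooted graph: all edges join adjacent levels. -/
def Vertical : Prop :=
  ∀ x y : X, R.G.Adj x y → R.level x = R.level y + 1 ∨ R.level y = R.level x + 1

/-- An index map on `(X,E_v)` over `M`. -/
def IsIndexMap {M : Type*} [MetricSpace M] (Φ : X → Set M) : Prop :=
  (∀ x, IsCompact (Φ x)) ∧ (∀ x, (Φ x).Nonempty) ∧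
    (∀ x y, y ∈ R.J 1 x → Φ y ⊆ Φ x) ∧
    (∀ f, R.IsRay f → ∃ p, (⋂ i, Φ (f i)) = {p})

/-- The attractor of an index map. -/
def attractor {M : Type*} [MetricSpace M] (Φ : X → Set M) : Set M :=
  ⋂ n : ℕ, ⋃ x ∈ {x | R.level x = n}, Φ x

/-- Exponential type-(b): `diam Φ(x) ≤ δ₀ e^{-b|x|}`. -/
def ExpType {M : Type*} [MetricSpace M] (Φ : X → Set M) (b δ₀ : ℝ) : Prop :=
  ∀ x, EMetric.diam (Φ x) ≤ ENNReal.ofReal (δ₀ * Real.exp (-b * R.level x))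

/-- Condition `(S_b)`. -/
def CondS {M : Type*} [MetricSpace M] (Φ : X → Set M) (b : ℝ) : Prop :=
  ∀ c : ℝ, 0 < c → ∃ ℓ : ℕ, ∀ (n : ℕ) (F : Set M),
    EMetric.diam F < ENNReal.ofReal (c * Real.exp (-b * n)) →
      Set.ncard {x | R.level x = n ∧ ((Φ x ∩ R.attractor Φ) ∩ F).Nonempty} ≤ ℓ

end RootedGraph

/-- Distance between two subsets of a metric space. -/
def setDist {M : Type*} [MetricSpace M] (s t : Set M) : ℝ :=
  sInf ((fun p : M × M => dist p.1 p.2) '' s ×ˢ t)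

/-- The AI_b-graph on `X` associated to an index map `Φ`:
same root, same vertical edges, and horizontal edges between distinct equal-level
vertices whose index sets are `γe^{-bn}`-close. -/
def RootedGraph.IsAIb {X M : Type*} [MetricSpace M] (R R' : RootedGraph X)
    (Φ : X → Set M) (b γ : ℝ) : Prop :=
  R'.root = R.root ∧ ∀ x y : X, R'.G.Adj x y ↔
    (R.G.Adj x y ∨ (R.level x = R.level y ∧ x ≠ y ∧
      setDist (Φ x) (Φ y) ≤ γ * Real.exp (-b * R.level x)))

/-- The AI_∞-graph on `X` associated to an index map `Φ`. -/
def RootedGraph.IsAIinf {X M : Type*} [MetricSpace M] (R R' : RootedGraph X)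
    (Φ : X → Set M) : Prop :=
  R'.root = R.root ∧ ∀ x y : X, R'.G.Adj x y ↔
    (R.G.Adj x y ∨ (R.level x = R.level y ∧ x ≠ y ∧ (Φ x ∩ Φ y).Nonempty))

end

/-- Splitting a walk at position `n`. -/
lemma walk_split {V : Type*} {G : SimpleGraph V} {u v : V} (p : G.Walk u v) :
    ∀ n : ℕ, n ≤ p.length →
      ∃ z : V, ∃ q : G.Walk u z, ∃ r : G.Walk z v,
        q.length = n ∧ r.length = p.length - n := by
  induction p with
  | nil =>
    intro n hn
    simp only [SimpleGraph.Walk.length_nil, Nat.le_zero] at hn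
    subst hn
    exact ⟨_, SimpleGraph.Walk.nil, SimpleGraph.Walk.nil, rfl, rfl⟩
  | cons h q ih =>
    intro n hn
    match n with
    | 0 => exact ⟨_, SimpleGraph.Walk.nil, SimpleGraph.Walk.cons h q, rfl, rfl⟩
    | n + 1 =>
      obtain ⟨z, a, b, ha, hb⟩ := ih n (by simpa using hn)
      exact ⟨z, SimpleGraph.Walk.cons h a, b, by simp [ha], by simpa using hb⟩

/-- Walks in the horizontal graph preserve the level. -/
lemma level_eq_of_Gh_walk {X : Type*} (R : RootedGraph X) {a b : X}
    (p : R.Gh.Walk a b) : R.level a = R.level b := by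
  induction p with
  | nil => rfl
  | cons h _ ih => exact h.2.trans ih

/-- Every vertex of level `n + m` has an ancestor at level `n` of which it is an
`m`-th descendant. -/
lemma exists_ancestor {X : Type*} (R : RootedGraph X) (m n : ℕ) (w : X)
    (hw : R.level w = n + m) : ∃ z : X, R.level z = n ∧ w ∈ R.J m z := by
  obtain ⟨p, hp⟩ := R.conn.exists_walk_length_eq_dist R.root w
  have hplen : p.length = n + m := by rw [hp]; exact hw
  obtain ⟨z, q, r, hq, hr⟩ := walk_split p n (by omega)
  have h1 : R.level z ≤ n := by
    have := SimpleGraph.dist_le q; rw [hq] at this; exact this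
  have h2 : R.G.dist z w ≤ m := by
    have := SimpleGraph.dist_le r; rw [hr, hplen] at this; omega
  have h3 : n + m ≤ R.level z + R.G.dist z w := by
    have := R.conn.dist_triangle (u := R.root) (v := z) (w := w)
    rw [← hw]; exact this
  have hzlev : R.level z = n := by omega
  refine ⟨z, hzlev, ?_, by omega⟩
  rw [hw, hzlev]

/-- Lemma 2.6: if `(X,E)` is `(m,k)`-departing then it is
`(m,ℓk)`-departing for every positive integer `ℓ`. -/
theorem departing_mul {X : Type*} (R : RootedGraph X) (m k : ℕ) (hm : 0 < m) (hk : 0 < k)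
    (h : R.Departing m k) : ∀ ℓ : ℕ, 0 < ℓ → R.Departing m (ℓ * k) := by
  intro ℓ hℓ
  induction ℓ with
  | zero => omega
  | succ ℓ ih =>
    rcases Nat.eq_zero_or_pos ℓ with hℓ0 | hℓpos
    · subst hℓ0; simpa using h
    have D : R.Departing m (ℓ * k) := ih hℓpos
    intro x y hlev hxy u hu v hv
    by_contra hle
    push_neg at hle
    have hring : (ℓ + 1) * k = ℓ * k + k := by ring
    -- `d_h(x,y) > k`, so by the base hypothesis `d_h(u,v) > 2k`.
    have hk_lt : ((k : ℕ∞)) < R.dh x y := by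
      refine lt_of_le_of_lt ?_ hxy
      exact_mod_cast Nat.le_mul_of_pos_left k (by omega)
    have h2k : ((2 * k : ℕ) : ℕ∞) < R.dh u v := h x y hlev hk_lt u hu v hv
    -- `d_h(u,v)` is finite; realize it by a walk.
    have hne : R.dh u v ≠ ⊤ := fun ht => by
      rw [ht] at hle; exact ENat.coe_ne_top _ (top_le_iff.mp hle)
    obtain ⟨c, hc⟩ : ∃ c : ℕ, R.dh u v = (c : ℕ∞) := by
      lift R.dh u v to ℕ using hne with c; exact ⟨c, rfl⟩
    obtain ⟨p, hplen⟩ := SimpleGraph.exists_walk_of_edist_eq_coe hc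
    have hc_le : c ≤ 2 * ((ℓ + 1) * k) := by
      rw [hc] at hle; exact_mod_cast hle
    have h2k_lt_c : 2 * k < c := by
      rw [hc] at h2k; exact_mod_cast h2k
    -- split the walk at distance `2k` from `u`
    obtain ⟨w, q, r, hq, hr⟩ := walk_split p (2 * k) (by omega)
    have hduw : R.dh u w ≤ ((2 * k : ℕ) : ℕ∞) := by
      have := SimpleGraph.edist_le q; rw [hq] at this; exact this
    have hdwv : R.dh w v ≤ ((2 * (ℓ * k) : ℕ) : ℕ∞) := by
      have := SimpleGraph.edist_le r
      refine this.trans ?_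
      rw [hr, hplen]
      exact Nat.cast_le.mpr (by omega)
    -- levels
    have hlevw : R.level w = R.level x + m := by
      rw [← level_eq_of_Gh_walk R q, hu.1]
    -- ancestor of `w`
    obtain ⟨z, hzlev, hwz⟩ := exists_ancestor R m (R.level x) w hlevw
    -- `d_h(x,z) ≤ k`
    have hxz : R.dh x z ≤ (k : ℕ∞) := by
      by_contra hgt
      push_neg at hgt
      have := h x z hzlev.symm hgt u hu w hwz
      exact absurd (this.trans_le hduw) (lt_irrefl _)
    -- `d_h(z,y) > ℓk`
    have hzy : ((ℓ * k : ℕ) : ℕ∞) < R.dh z y := by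
      have htri : R.dh x y ≤ R.dh x z + R.dh z y := SimpleGraph.edist_triangle
      by_contra hle'
      push_neg at hle'
      have : R.dh x y ≤ ((k : ℕ∞)) + ((ℓ * k : ℕ) : ℕ∞) :=
        htri.trans (add_le_add hxz hle')
      have hlt : (((ℓ + 1) * k : ℕ) : ℕ∞) < ((k + ℓ * k : ℕ) : ℕ∞) := by
        refine (hxy.trans_le this).trans_eq ?_
        push_cast; ring
      rw [Nat.cast_lt] at hlt
      omega
    -- apply the inductive hypothesis to `z, y, w, v`
    have := D z y (hzlev.trans hlev) hzy w hwz v hv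
    exact absurd (this.trans_le hdwv) (lt_irrefl _)
end

section
/- Every (1,1)-departing rooted graph is (m,k)-departing for all positive integers m and k. -/
open SimpleGraph Metric
open scoped ENNReal ENat

section Aux

variable {X : Type*} (R : RootedGraph X)

/-- Peel the first edge off a walk of positive length. -/
lemma walk_peel1 {G : SimpleGraph X} {a b : X} {n : ℕ} (p : G.Walk a b)
    (hp : p.length = n + 1) : ∃ (c : X) (_ : G.Adj a c) (q : G.Walk c b), q.length = n := by
  cases p with
  | nil => simp at hp
  | cons h q => exact ⟨_, h, q, by simpa using hp⟩

/-- Peel the first two edges off a walk of length at least `2`. -/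
lemma walk_peel2 {G : SimpleGraph X} {a b : X} (p : G.Walk a b) (h : 2 ≤ p.length) :
    ∃ (c d : X) (_ : G.Adj a c) (_ : G.Adj c d) (q : G.Walk d b),
      q.length + 2 = p.length := by
  cases p with
  | nil => simp at h
  | cons h1 p' =>
    cases p' with
    | nil => simp at h
    | cons h2 q => exact ⟨_, _, h1, h2, q, by simp [SimpleGraph.Walk.length_cons]⟩

/-- Splitting a descendant: a vertex of `J_{m+1}(x)` lies in `J_1(w)` for some
`w ∈ J_m(x)`. -/
lemma J_split {m : ℕ} {x u : X} (hu : u ∈ R.J (m + 1) x) :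
    ∃ w, w ∈ R.J m x ∧ u ∈ R.J 1 w := by
  obtain ⟨hl, hd⟩ := hu
  have hr : R.G.dist u x = m + 1 := by rw [SimpleGraph.dist_comm]; exact hd
  obtain ⟨p, hp⟩ := R.conn.exists_walk_length_eq_dist u x
  rw [hr] at hp
  obtain ⟨c, hadj, q, hq⟩ := walk_peel1 p hp
  have hcx : R.G.dist c x ≤ m := hq ▸ SimpleGraph.dist_le q
  have hxc : R.G.dist x c ≤ m := by rwa [SimpleGraph.dist_comm]
  have hcu : R.G.dist c u = 1 := SimpleGraph.dist_eq_one_iff_adj.mpr hadj.symm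
  have htri : R.G.dist x u ≤ R.G.dist x c + R.G.dist c u := R.conn.dist_triangle
  have hxc' : R.G.dist x c = m := by omega
  -- level computations
  have hlev1 : R.G.dist R.root c ≤ R.G.dist R.root x + R.G.dist x c := R.conn.dist_triangle
  have hlev2 : R.G.dist R.root u ≤ R.G.dist R.root c + R.G.dist c u := R.conn.dist_triangle
  have hlu : R.G.dist R.root u = R.G.dist R.root x + (m + 1) := hl
  have hlevc : R.G.dist R.root c = R.G.dist R.root x + m := by omega
  refine ⟨c, ⟨hlevc, hxc'⟩, ⟨?_, hcu⟩⟩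
  show R.G.dist R.root u = R.G.dist R.root c + 1
  omega

/-- Every vertex of level `n + 1` has a "parent" of level `n`. -/
lemma exists_parent {c : X} {n : ℕ} (hc : R.level c = n + 1) :
    ∃ z, R.level z = n ∧ c ∈ R.J 1 z := by
  have hroot : R.level R.root = 0 := SimpleGraph.dist_self
  have hcJ : c ∈ R.J (n + 1) R.root := by
    constructor
    · show R.level c = R.level R.root + (n + 1); omega
    · exact hc
  obtain ⟨z, hz, hcz⟩ := J_split R hcJ
  exact ⟨z, by have := hz.1; omega, hcz⟩

/-- Contrapositive of `(1,1)`-departing. -/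
lemma base_step (h : R.Departing 1 1) {x y u v : X} (hxy : R.level x = R.level y)
    (hu : u ∈ R.J 1 x) (hv : v ∈ R.J 1 y) (hle : R.Gh.edist u v ≤ 2) :
    R.dh x y ≤ 1 := by
  by_contra hc
  push_neg at hc
  have h1 : ((1 : ℕ) : ℕ∞) < R.dh x y := by exact_mod_cast hc
  have := h x y hxy h1 u hu v hv
  have h2 : ((2 * 1 : ℕ) : ℕ∞) = 2 := by norm_num
  rw [h2] at this
  exact absurd hle (not_le.mpr this)

/-- Walking along a horizontal path upstairs, the parents stay close. -/
lemma chain_step (h : R.Departing 1 1) :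
    ∀ n : ℕ, ∀ u v : X, ∀ p : R.Gh.Walk u v, p.length = n →
      ∀ x y : X, R.level x = R.level y → u ∈ R.J 1 x → v ∈ R.J 1 y →
        R.dh x y ≤ ((max 1 ((n + 1) / 2) : ℕ) : ℕ∞) := by
  intro n
  induction n using Nat.strong_induction_on with
  | _ n ih =>
    intro u v p hp x y hxy hu hv
    by_cases hn : n ≤ 2
    · have hle : R.Gh.edist u v ≤ 2 := by
        refine le_trans p.edist_le ?_
        rw [hp]
        exact_mod_cast Nat.cast_le.mpr hn
      have := base_step R h hxy hu hv hle
      refine le_trans this ?_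
      exact_mod_cast Nat.cast_le.mpr (le_max_left 1 ((n + 1) / 2))
    · obtain ⟨b, c, h1, h2, q, hq⟩ := walk_peel2 p (by omega)
      rw [hp] at hq
      -- level of c
      have hub : R.level u = R.level b := h1.2
      have hbc : R.level b = R.level c := h2.2
      have hux : R.level u = R.level x + 1 := hu.1
      have hc : R.level c = R.level x + 1 := by omega
      obtain ⟨z, hz, hcz⟩ := exists_parent R hc
      have hxz : R.dh x z ≤ 1 := by
        refine base_step R h (by omega) hu hcz ?_
        have : (SimpleGraph.Walk.cons h1 (SimpleGraph.Walk.cons h2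
            SimpleGraph.Walk.nil)).length = 2 := by simp
        refine le_trans ((SimpleGraph.Walk.cons h1 (SimpleGraph.Walk.cons h2
            SimpleGraph.Walk.nil)).edist_le) ?_
        rw [this]
        norm_num
      have hzy : R.dh z y ≤ ((max 1 ((q.length + 1) / 2) : ℕ) : ℕ∞) :=
        ih q.length (by omega) c v q rfl z y (by omega) hcz hv
      calc R.dh x y ≤ R.dh x z + R.dh z y := SimpleGraph.edist_triangle
        _ ≤ ((1 : ℕ) : ℕ∞) + ((max 1 ((q.length + 1) / 2) : ℕ) : ℕ∞) := by
            refine add_le_add ?_ hzy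
            exact_mod_cast hxz
        _ = (((1 + max 1 ((q.length + 1) / 2) : ℕ)) : ℕ∞) := by push_cast; ring
        _ ≤ ((max 1 ((n + 1) / 2) : ℕ) : ℕ∞) := by
            refine Nat.cast_le.mpr ?_
            omega

/-- `(1,1)`-departing implies `(1,k)`-departing for `k ≥ 1`. -/
lemma dep_one_k (h : R.Departing 1 1) (k : ℕ) (hk : 0 < k) : R.Departing 1 k := by
  intro x y hxy hlt u hu v hv
  by_contra hcon
  push_neg at hcon
  have hne : R.Gh.edist u v ≠ ⊤ :=
    ne_top_of_le_ne_top (ENat.coe_ne_top _) hcon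
  obtain ⟨p, hp⟩ := SimpleGraph.exists_walk_of_edist_ne_top hne
  have hplen : p.length ≤ 2 * k := by
    have : (p.length : ℕ∞) ≤ ((2 * k : ℕ) : ℕ∞) := hp ▸ hcon
    exact_mod_cast this
  have hchain := chain_step R h p.length u v p rfl x y hxy hu hv
  have hle : R.dh x y ≤ (k : ℕ∞) := by
    refine le_trans hchain ?_
    exact_mod_cast Nat.cast_le.mpr (by omega : max 1 ((p.length + 1) / 2) ≤ k)
  exact absurd hlt (not_lt.mpr hle)

end Aux

/-- Corollary 2.7: every `(1,1)`-departing rooted graph is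
`(m,k)`-departing for all positive integers `m`, `k`. -/
theorem departing_of_one_one {X : Type*} (R : RootedGraph X) (h : R.Departing 1 1) :
    ∀ m k : ℕ, 0 < m → 0 < k → R.Departing m k := by
  intro m
  induction m with
  | zero => intro k hm; omega
  | succ m ihm =>
    intro k hm hk
    rcases Nat.eq_zero_or_pos m with h0 | hmp
    · subst h0
      exact dep_one_k R h k hk
    · intro x y hxy hlt u hu v hv
      obtain ⟨w, hw, huw⟩ := J_split R hu
      obtain ⟨w', hw', hvw'⟩ := J_split R hv
      have hww' : ((2 * k : ℕ) : ℕ∞) < R.dh w w' :=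
        ihm k hmp hk x y hxy hlt w hw w' hw'
      have hlev : R.level w = R.level w' := by
        have := hw.1; have := hw'.1; omega
      have hklt : (k : ℕ∞) < R.dh w w' := by
        refine lt_of_le_of_lt ?_ hww'
        exact_mod_cast Nat.cast_le.mpr (by omega : k ≤ 2 * k)
      exact dep_one_k R h k hk w w' hlev hklt u huw v hvw'
end

section
/- In an expansive rooted graph, any two vertices x, y can be joined by a convex geodesic, i.e., a geodesic [x_0,…,x_n] with x_0=x, x_n=y satisfying |x_i| ≤ (|x_{i-1}|+|x_{i+1}|)/2 for all 0 < i < n. -/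
open SimpleGraph Metric
open scoped ENNReal ENat

section Aux

open SimpleGraph

variable {X : Type*}

/-- A walk to `p.getVert i` of length at most `i`. -/
lemma aux_exists_walk_to_getVert {G : SimpleGraph X} :
    ∀ {u y : X} (p : G.Walk u y) (i : ℕ), ∃ q : G.Walk u (p.getVert i), q.length ≤ i := by
  intro u y p
  induction p with
  | nil =>
    intro i
    exact ⟨Walk.nil, by simp⟩
  | cons h t ih =>
    intro i
    cases i with
    | zero => exact ⟨Walk.nil, Nat.le_of_eq rfl⟩
    | succ i =>
      obtain ⟨q, hq⟩ := ih i
      exact ⟨Walk.cons h q, by simpa using Nat.succ_le_succ hq⟩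

/-- Replacement surgery: replace the `(i+1)`-st vertex of a walk by `z`. -/
lemma aux_replace {G : SimpleGraph X} (f : X → ℕ) :
    ∀ (i : ℕ) {u y : X} (p : G.Walk u y), i + 2 ≤ p.length →
      ∀ z : X, G.Adj (p.getVert i) z → G.Adj z (p.getVert (i + 2)) →
      ∃ q : G.Walk u y, q.length = p.length ∧
        (q.support.map f).sum + f (p.getVert (i + 1)) = (p.support.map f).sum + f z := by
  intro i
  induction i with
  | zero =>
    intro u y p hp z h1 h2
    cases p with
    | nil => simp at hp
    | cons h t =>
      cases t with
      | nil => simp at hp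
      | @cons b c _ h' t' =>
        have h1' : G.Adj u z := by simpa using h1
        have h2' : G.Adj z c := by simpa using h2
        refine ⟨Walk.cons h1' (Walk.cons h2' t'), by simp, ?_⟩
        simp [Walk.support_cons]
        omega
  | succ i ih =>
    intro u y p hp z h1 h2
    cases p with
    | nil => simp at hp
    | cons h t =>
      have hlen : i + 2 ≤ t.length := by
        simp only [Walk.length_cons] at hp; omega
      have h1' : G.Adj (t.getVert i) z := by simpa using h1
      have h2' : G.Adj z (t.getVert (i + 2)) := by
        have : (Walk.cons h t).getVert (i + 1 + 2) = t.getVert (i + 2) := by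
          rw [show i + 1 + 2 = (i + 2) + 1 by omega]
          exact Walk.getVert_cons_succ t h
        rwa [this] at h2
      obtain ⟨q, hq1, hq2⟩ := ih t hlen z h1' h2'
      refine ⟨Walk.cons h q, by simp [hq1], ?_⟩
      have : (Walk.cons h t).getVert (i + 1 + 1) = t.getVert (i + 1) := by
        rw [show i + 1 + 1 = (i + 1) + 1 by omega]
        exact Walk.getVert_cons_succ t h
      rw [this]
      simp only [Walk.support_cons, List.map_cons, List.sum_cons]
      omega

/-- Shortcut surgery: if two vertices at distance two along a walk coincide or are
adjacent, there is a strictly shorter walk. -/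
lemma aux_shortcut {G : SimpleGraph X} :
    ∀ (i : ℕ) {u y : X} (p : G.Walk u y), i + 2 ≤ p.length →
      (p.getVert i = p.getVert (i + 2) ∨ G.Adj (p.getVert i) (p.getVert (i + 2))) →
      ∃ q : G.Walk u y, q.length + 1 ≤ p.length := by
  intro i
  induction i with
  | zero =>
    intro u y p hp hcase
    cases p with
    | nil => simp at hp
    | cons h t =>
      cases t with
      | nil => simp at hp
      | @cons b c _ h' t' =>
        rcases hcase with heq | hadj
        · have heq' : u = c := by simpa using heq
          exact ⟨t'.copy heq'.symm rfl, by simp⟩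
        · have hadj' : G.Adj u c := by simpa using hadj
          exact ⟨Walk.cons hadj' t', by simp⟩
  | succ i ih =>
    intro u y p hp hcase
    cases p with
    | nil => simp at hp
    | cons h t =>
      have hlen : i + 2 ≤ t.length := by
        simp only [Walk.length_cons] at hp; omega
      have hc : t.getVert i = t.getVert (i + 2) ∨ G.Adj (t.getVert i) (t.getVert (i + 2)) := by
        have e1 : (Walk.cons h t).getVert (i + 1) = t.getVert i := Walk.getVert_cons_succ t h
        have e2 : (Walk.cons h t).getVert (i + 1 + 2) = t.getVert (i + 2) := by
          rw [show i + 1 + 2 = (i + 2) + 1 by omega]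
          exact Walk.getVert_cons_succ t h
        rwa [e1, e2] at hcase
      obtain ⟨q, hq⟩ := ih t hlen hc
      exact ⟨Walk.cons h q, by simp; omega⟩

variable (R : RootedGraph X)

/-- The level function is 1-Lipschitz along edges. -/
lemma aux_level_le_of_adj {u v : X} (h : R.G.Adj u v) : R.level v ≤ R.level u + 1 := by
  have h1 : R.G.dist u v = 1 := SimpleGraph.dist_eq_one_iff_adj.mpr h
  have := R.conn.dist_triangle (u := R.root) (v := u) (w := v)
  simp only [RootedGraph.level]
  omega

/-- Every vertex of positive level has a parent. -/
lemma aux_exists_parent {v : X} (hv : 0 < R.level v) : ∃ z, v ∈ R.J 1 z := by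
  obtain ⟨p, hp⟩ := R.conn.exists_walk_length_eq_dist R.root v
  set n := R.level v with hn
  have hplen : p.length = n := hp
  have hlt : n - 1 < p.length := by omega
  set z := p.getVert (n - 1) with hz
  have hgv : p.getVert n = v := by
    rw [← hplen]; exact p.getVert_length
  have hadj : R.G.Adj z v := by
    have := p.adj_getVert_succ hlt
    rw [show n - 1 + 1 = n by omega, hgv] at this
    exact this
  have hle : R.G.dist R.root z ≤ n - 1 := by
    obtain ⟨q, hq⟩ := aux_exists_walk_to_getVert p (n - 1)
    exact le_trans (SimpleGraph.dist_le q) hq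
  have hge : n ≤ R.G.dist R.root z + 1 := by
    have htri := R.conn.dist_triangle (u := R.root) (v := z) (w := v)
    have h1 : R.G.dist z v = 1 := SimpleGraph.dist_eq_one_iff_adj.mpr hadj
    simp only [hn, RootedGraph.level] at *
    omega
  have hlvz : R.level v = R.level z + 1 := by
    simp only [RootedGraph.level] at *
    omega
  exact ⟨z, hlvz, SimpleGraph.dist_eq_one_iff_adj.mpr hadj⟩

/-- Key consequence of expansiveness: if two vertices at horizontal distance at most one
have parents of equal level, those parents are at horizontal distance at most one. -/
lemma aux_key (hexp : R.Expansive) {u v z w : X} (huv : R.dh u v ≤ 1)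
    (hu : u ∈ R.J 1 z) (hv : v ∈ R.J 1 w) (hzw : R.level z = R.level w) :
    z = w ∨ R.G.Adj z w := by
  by_contra hcon
  push_neg at hcon
  obtain ⟨hne, hnadj⟩ := hcon
  have h0 : R.Gh.edist z w ≠ 0 := fun h' =>
    hne (SimpleGraph.edist_eq_zero_iff.mp h')
  have h1 : R.Gh.edist z w ≠ 1 := fun h' =>
    hnadj (SimpleGraph.edist_eq_one_iff_adj.mp h').1
  have hgt : (1 : ℕ∞) < R.dh z w := by
    rw [RootedGraph.dh]
    rcases lt_or_ge 1 (R.Gh.edist z w) with h | h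
    · exact h
    · rcases lt_or_eq_of_le h with h' | h'
      · exact absurd (ENat.lt_one_iff_eq_zero.mp h') h0
      · exact absurd h' h1
  have := hexp z w hzw hgt u hu v hv
  rw [RootedGraph.dh] at huv this
  exact absurd huv (not_le.mpr this)

/-- Membership in `J 1` from adjacency plus level increment. -/
lemma aux_mem_J1 {z v : X} (hadj : R.G.Adj z v) (hlv : R.level v = R.level z + 1) :
    v ∈ R.J 1 z :=
  ⟨hlv, SimpleGraph.dist_eq_one_iff_adj.mpr hadj⟩

end Aux

/-- Proposition 2.3: in an expansive rooted graph, any two vertices are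
joined by a convex geodesic. -/
theorem exists_convex_geodesic {X : Type*} (R : RootedGraph X) (hexp : R.Expansive)
    (x y : X) :
    ∃ p : R.G.Walk x y, p.length = R.G.dist x y ∧
      ∀ i : ℕ, i + 2 ≤ p.length →
        2 * R.level (p.getVert (i + 1)) ≤ R.level (p.getVert i) + R.level (p.getVert (i + 2)) := by
  classical
  -- pick a geodesic minimizing the sum of levels
  set S : Set ℕ := {n | ∃ p : R.G.Walk x y, p.length = R.G.dist x y ∧
    (p.support.map R.level).sum = n} with hS
  obtain ⟨p₀, hp₀⟩ := R.conn.exists_walk_length_eq_dist x y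
  have hSne : S.Nonempty := ⟨_, p₀, hp₀, rfl⟩
  obtain ⟨p, hplen, hpsum⟩ := Nat.sInf_mem hSne
  refine ⟨p, hplen, ?_⟩
  intro i hi
  by_contra hvio
  push_neg at hvio
  set a := R.level (p.getVert i) with ha
  set b := R.level (p.getVert (i + 1)) with hb
  set c := R.level (p.getVert (i + 2)) with hc
  have hadj1 : R.G.Adj (p.getVert i) (p.getVert (i + 1)) :=
    p.adj_getVert_succ (by omega)
  have hadj2 : R.G.Adj (p.getVert (i + 1)) (p.getVert (i + 2)) := by
    have := p.adj_getVert_succ (i := i + 1) (by omega)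
    rwa [show i + 1 + 1 = i + 2 by omega] at this
  have hab : b ≤ a + 1 := aux_level_le_of_adj R hadj1
  have hba : a ≤ b + 1 := aux_level_le_of_adj R hadj1.symm
  have hbc : c ≤ b + 1 := aux_level_le_of_adj R hadj2
  have hcb : b ≤ c + 1 := aux_level_le_of_adj R hadj2.symm
  -- no shortcut is possible along a geodesic
  have hns : ¬ (p.getVert i = p.getVert (i + 2) ∨
      R.G.Adj (p.getVert i) (p.getVert (i + 2))) := by
    intro hcase
    obtain ⟨q, hq⟩ := aux_shortcut i p hi hcase
    have := SimpleGraph.dist_le q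
    omega
  -- no level-sum-decreasing replacement is possible
  have hnr : ∀ z : X, R.G.Adj (p.getVert i) z → R.G.Adj z (p.getVert (i + 2)) →
      b ≤ R.level z := by
    intro z hz1 hz2
    by_contra hzl
    push_neg at hzl
    obtain ⟨q, hq1, hq2⟩ := aux_replace R.level i p hi z hz1 hz2
    have hqS : (q.support.map R.level).sum ∈ S := ⟨q, by omega, rfl⟩
    have := Nat.sInf_le hqS
    omega
  have hcases : (b = a + 1 ∧ b = c + 1) ∨ (b = a + 1 ∧ b = c) ∨ (a = b ∧ b = c + 1) := by
    omega
  rcases hcases with ⟨h1, h2⟩ | ⟨h1, h2⟩ | ⟨h1, h2⟩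
  · -- peak: common child
    have hu : p.getVert (i + 1) ∈ R.J 1 (p.getVert i) := aux_mem_J1 R hadj1 h1
    have hv : p.getVert (i + 1) ∈ R.J 1 (p.getVert (i + 2)) := aux_mem_J1 R hadj2.symm h2
    have huv : R.dh (p.getVert (i + 1)) (p.getVert (i + 1)) ≤ 1 := by
      rw [RootedGraph.dh, SimpleGraph.edist_self]
      exact zero_le_one
    exact hns (aux_key R hexp huv hu hv (by omega))
  · -- up then horizontal
    have hu : p.getVert (i + 1) ∈ R.J 1 (p.getVert i) := aux_mem_J1 R hadj1 h1
    obtain ⟨w, hw⟩ := aux_exists_parent R (v := p.getVert (i + 2)) (by omega)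
    have hlw : R.level w = a := by
      have := hw.1
      omega
    have huv : R.dh (p.getVert (i + 1)) (p.getVert (i + 2)) ≤ 1 := by
      rw [RootedGraph.dh]
      have : R.Gh.Adj (p.getVert (i + 1)) (p.getVert (i + 2)) := ⟨hadj2, by omega⟩
      exact le_of_eq (SimpleGraph.edist_eq_one_iff_adj.mpr this)
    rcases aux_key R hexp huv hu hw (by omega) with heq | hA
    · -- parent is p.getVert i itself: shortcut
      have : R.G.Adj (p.getVert i) (p.getVert (i + 2)) := by
        rw [heq]
        exact SimpleGraph.dist_eq_one_iff_adj.mp hw.2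
      exact hns (Or.inr this)
    · -- replace the middle vertex by w
      have hw2 : R.G.Adj w (p.getVert (i + 2)) := SimpleGraph.dist_eq_one_iff_adj.mp hw.2
      have := hnr w hA hw2
      omega
  · -- horizontal then down
    have hv : p.getVert (i + 1) ∈ R.J 1 (p.getVert (i + 2)) := aux_mem_J1 R hadj2.symm h2
    obtain ⟨z, hz⟩ := aux_exists_parent R (v := p.getVert i) (by omega)
    have hlz : R.level z = c := by
      have := hz.1
      omega
    have huv : R.dh (p.getVert i) (p.getVert (i + 1)) ≤ 1 := by
      rw [RootedGraph.dh]
      have : R.Gh.Adj (p.getVert i) (p.getVert (i + 1)) := ⟨hadj1, by omega⟩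
      exact le_of_eq (SimpleGraph.edist_eq_one_iff_adj.mpr this)
    rcases aux_key R hexp huv hz hv (by omega) with heq | hA
    · have : R.G.Adj (p.getVert (i + 2)) (p.getVert i) := by
        rw [← heq]
        exact SimpleGraph.dist_eq_one_iff_adj.mp hz.2
      exact hns (Or.inr this.symm)
    · have hz1 : R.G.Adj (p.getVert i) z :=
        (SimpleGraph.dist_eq_one_iff_adj.mp hz.2).symm
      have := hnr z hz1 hA
      omega
end

section
/- For an expansive rooted graph (X,E), the following are equivalent: (i) (X,E) is Gromov hyperbolic; (ii) there exists L < ∞ bounding the lengths of all horizontal geodesics; (iii) (X,E) is (m,k)-departing for some positive integers m, k. Moreover, if all horizontal geodesics have length at most L, then (X,E) is (L+1, L+2)-departing. -/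
open SimpleGraph Metric
open scoped ENNReal ENat

noncomputable section AuxHyp

open SimpleGraph

namespace RootedGraph

variable {X : Type*} (R : RootedGraph X)

lemma gh_le : R.Gh ≤ R.G := fun _ _ h => h.1

lemma dh_comm (x y : X) : R.dh x y = R.dh y x := SimpleGraph.edist_comm

lemma dh_self (x : X) : R.dh x x = 0 := SimpleGraph.edist_self

lemma dh_triangle (x y z : X) : R.dh x z ≤ R.dh x y + R.dh y z :=
  SimpleGraph.edist_triangle

lemma level_root : R.level R.root = 0 := SimpleGraph.dist_self

lemma eq_root_of_level_eq_zero {x : X} (h : R.level x = 0) : x = R.root :=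
  ((R.conn.dist_eq_zero_iff).mp h).symm

lemma level_le (x y : X) : R.level y ≤ R.level x + R.G.dist x y :=
  R.conn.dist_triangle

lemma level_adj {x y : X} (h : R.G.Adj x y) : R.level y ≤ R.level x + 1 := by
  have h1 := R.level_le x y
  rwa [SimpleGraph.dist_eq_one_iff_adj.mpr h] at h1

lemma mem_J_iff {m : ℕ} {x u : X} :
    u ∈ R.J m x ↔ R.level u = R.level x + m ∧ R.G.dist x u = m := Iff.rfl

lemma adj_of_mem_J1 {x u : X} (h : u ∈ R.J 1 x) : R.G.Adj x u :=
  SimpleGraph.dist_eq_one_iff_adj.mp h.2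

/-- `Anc R r a w` : `a` is an `r`-fold ancestor of `w` along a chain of parents. -/
inductive Anc (R : RootedGraph X) : ℕ → X → X → Prop
  | refl (x : X) : Anc R 0 x x
  | step {r : ℕ} {a w w' : X} : Anc R r a w → w' ∈ R.J 1 w → Anc R (r + 1) a w'

lemma Anc.level_eq {r : ℕ} {a w : X} (h : R.Anc r a w) : R.level w = R.level a + r := by
  induction h with
  | refl x => rfl
  | step h hj ih => rw [hj.1, ih]; omega

lemma Anc.dist_le {r : ℕ} {a w : X} (h : R.Anc r a w) : R.G.dist a w ≤ r := by
  induction h with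
  | refl x => simp
  | @step r a w w' h hj ih =>
    have h1 : R.G.dist a w' ≤ R.G.dist a w + R.G.dist w w' := R.conn.dist_triangle
    rw [hj.2] at h1
    omega

lemma Anc.trans {s : ℕ} {b c : X} (h2 : R.Anc s b c) :
    ∀ {r : ℕ} {a : X}, R.Anc r a b → R.Anc (r + s) a c := by
  induction h2 with
  | refl x => intro r a h1; exact h1
  | step h hj ih => intro r a h1; exact (ih h1).step hj

lemma exists_parent {w : X} (hw : 1 ≤ R.level w) : ∃ p, w ∈ R.J 1 p := by
  obtain ⟨q, hq⟩ := R.conn.exists_walk_length_eq_dist R.root w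
  have hlen : 1 ≤ q.length := by
    rw [hq]; exact hw
  set p := q.getVert (q.length - 1) with hp
  have hadj : R.G.Adj p w := by
    have := q.adj_getVert_succ (i := q.length - 1) (by omega)
    rw [show q.length - 1 + 1 = q.length by omega, q.getVert_length] at this
    exact this
  refine ⟨p, ?_, SimpleGraph.dist_eq_one_iff_adj.mpr hadj⟩
  have h1 : R.level p ≤ q.length - 1 := by
    have : R.G.dist R.root p ≤ q.length - 1 := by
      have hgen : ∀ (i : ℕ), R.G.dist R.root (q.getVert i) ≤ i := by
        intro i
        induction i with
        | zero => simp [q.getVert_zero]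
        | succ i ih =>
          by_cases hi : i < q.length
          · have hadj2 := q.adj_getVert_succ hi
            calc R.G.dist R.root (q.getVert (i+1))
                ≤ R.G.dist R.root (q.getVert i) + R.G.dist (q.getVert i) (q.getVert (i+1)) :=
                  R.conn.dist_triangle
              _ ≤ i + 1 := by rw [SimpleGraph.dist_eq_one_iff_adj.mpr hadj2]; omega
          · have hv1 : q.getVert (i+1) = w := q.getVert_of_length_le (show q.length ≤ i+1 by omega)
            have hv2 : q.getVert i = w := q.getVert_of_length_le (show q.length ≤ i by omega)
            rw [hv1, ← hv2]
            omega
      exact hgen _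
    exact this
  have h2 : R.level w ≤ R.level p + 1 := R.level_adj hadj
  have h3 : R.level w = q.length := hq.symm
  show R.level w = R.level p + 1
  omega

lemma exists_anc (w : X) (r : ℕ) (h : r ≤ R.level w) : ∃ a, R.Anc r a w := by
  induction r generalizing w with
  | zero => exact ⟨w, Anc.refl w⟩
  | succ r ih =>
    have hw1 : 1 ≤ R.level w := le_trans (by omega : (1:ℕ) ≤ r + 1) h
    obtain ⟨p, hp⟩ := R.exists_parent hw1
    have hlev : R.level w = R.level p + 1 := hp.1
    have hrp : r ≤ R.level p := by omega
    obtain ⟨a, ha⟩ := ih p hrp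
    exact ⟨a, ha.step hp⟩

lemma gh_walk_support_level {u v : X} (p : R.Gh.Walk u v) :
    ∀ w ∈ p.support, R.level w = R.level u := by
  induction p with
  | nil => intro w hw; simp at hw; subst hw; rfl
  | cons h q ih =>
    intro w hw
    rw [SimpleGraph.Walk.support_cons] at hw
    rcases List.mem_cons.mp hw with hw | hw
    · subst hw; rfl
    · rw [ih w hw]; exact h.2.symm

lemma gh_walk_level {u v : X} (p : R.Gh.Walk u v) : R.level u = R.level v :=
  (R.gh_walk_support_level p v p.end_mem_support).symm

lemma dh_exists_nat {x y : X} {N : ℕ} (h : R.dh x y ≤ (N : ℕ∞)) :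
    ∃ c : ℕ, R.dh x y = (c : ℕ∞) ∧ c ≤ N := by
  have hne : R.dh x y ≠ ⊤ := by
    intro hh; rw [hh] at h; exact absurd h (by simp)
  obtain ⟨c, hc⟩ := WithTop.ne_top_iff_exists.mp hne
  exact ⟨c, hc.symm, by rw [← hc] at h; exact Nat.cast_le.mp h⟩

lemma level_eq_of_dh_ne_top {x y : X} {N : ℕ} (h : R.dh x y ≤ (N : ℕ∞)) :
    R.level x = R.level y := by
  obtain ⟨c, hc, -⟩ := R.dh_exists_nat h
  obtain ⟨p, -⟩ := SimpleGraph.exists_walk_of_edist_eq_coe hc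
  exact R.gh_walk_level p

lemma dist_le_dh_nat {x y : X} {c : ℕ} (h : R.dh x y ≤ (c : ℕ∞)) : R.G.dist x y ≤ c := by
  obtain ⟨c', hc', hcc⟩ := R.dh_exists_nat h
  obtain ⟨p, hp⟩ := SimpleGraph.exists_walk_of_edist_eq_coe hc'
  have := SimpleGraph.dist_le (p.map (SimpleGraph.Hom.ofLE R.gh_le))
  rw [SimpleGraph.Walk.length_map, hp] at this
  exact this.trans hcc

lemma edist_getVert_le {G : SimpleGraph X} {u v : X} (q : G.Walk u v) (i d : ℕ) :
    G.edist (q.getVert i) (q.getVert (i + d)) ≤ (d : ℕ∞) := by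
  induction d with
  | zero => simp [SimpleGraph.edist_self]
  | succ d ih =>
    have hstep : G.edist (q.getVert (i + d)) (q.getVert (i + d + 1)) ≤ 1 := by
      by_cases hd : i + d < q.length
      · exact le_of_eq (SimpleGraph.edist_eq_one_iff_adj.mpr (q.adj_getVert_succ hd))
      · rw [q.getVert_of_length_le (by omega), q.getVert_of_length_le (by omega)]
        simp [SimpleGraph.edist_self]
    calc G.edist (q.getVert i) (q.getVert (i + (d + 1)))
        ≤ G.edist (q.getVert i) (q.getVert (i + d))
          + G.edist (q.getVert (i + d)) (q.getVert (i + d + 1)) := by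
          rw [show i + (d+1) = i + d + 1 by omega]; exact SimpleGraph.edist_triangle
      _ ≤ (d : ℕ∞) + 1 := add_le_add ih hstep
      _ = ((d + 1 : ℕ) : ℕ∞) := by push_cast; ring

lemma parents_dh_le_one (hexp : R.Expansive) {p q u v : X}
    (hpq : R.level p = R.level q) (hu : u ∈ R.J 1 p) (hv : v ∈ R.J 1 q)
    (huv : R.dh u v ≤ 1) : R.dh p q ≤ 1 := by
  by_contra hgt
  exact absurd (hexp p q hpq (not_le.mp hgt) u hu v hv) (not_lt.mpr huv)

lemma anc_dh_le_one (hexp : R.Expansive) :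
    ∀ {r : ℕ} {a w b w' : X}, R.Anc r a w → R.Anc r b w' → R.level w = R.level w' →
      R.dh w w' ≤ 1 → R.dh a b ≤ 1 := by
  intro r
  induction r with
  | zero =>
    intro a w b w' ha hb _ hd
    cases ha; cases hb; exact hd
  | succ r ih =>
    intro a w b w' ha hb hl hd
    cases ha with
    | @step _ _ p _ ha' hu =>
      cases hb with
      | @step _ _ q _ hb' hv =>
        have hpq : R.level p = R.level q := by
          have h1 := hu.1; have h2 := hv.1; omega
        exact ih ha' hb' hpq (R.parents_dh_le_one hexp hpq hu hv hd)

lemma walk_anc_dh (hexp : R.Expansive) :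
    ∀ {w w' : X} (p : R.Gh.Walk w w') {r : ℕ} {a b : X},
      R.Anc r a w → R.Anc r b w' → R.dh a b ≤ ((max p.length 1 : ℕ) : ℕ∞) := by
  intro w w' p
  induction p with
  | nil =>
    intro r a b ha hb
    have h0 : R.dh a b ≤ 1 :=
      R.anc_dh_le_one hexp ha hb rfl (by rw [R.dh_self]; exact zero_le_one)
    exact h0.trans (by simp)
  | @cons w σ w' h q ih =>
    intro r a b ha hb
    cases q with
    | nil =>
      have hd := le_of_eq (SimpleGraph.edist_eq_one_iff_adj.mpr h)
      have h0 := R.anc_dh_le_one hexp ha hb h.2 hd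
      exact h0.trans (by simp)
    | cons h2 q2 =>
      have hrlev : r ≤ R.level σ := by
        have hl := ha.level_eq
        have := h.2
        omega
      obtain ⟨aσ, haσ⟩ := R.exists_anc σ r hrlev
      have h1 : R.dh a aσ ≤ 1 :=
        R.anc_dh_le_one hexp ha haσ h.2 (le_of_eq (SimpleGraph.edist_eq_one_iff_adj.mpr h))
      have h2' := ih haσ hb
      have e1 : ((max (SimpleGraph.Walk.cons h2 q2).length 1 : ℕ) : ℕ∞)
          = ((q2.length : ℕ) : ℕ∞) + 1 := by
        rw [SimpleGraph.Walk.length_cons, Nat.max_eq_left (by omega)]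
        push_cast; ring
      simp only [SimpleGraph.Walk.length_cons]
      calc R.dh a b ≤ R.dh a aσ + R.dh aσ b := R.dh_triangle _ _ _
        _ ≤ 1 + (((q2.length : ℕ) : ℕ∞) + 1) := by
            refine add_le_add h1 (h2'.trans (le_of_eq ?_))
            rw [SimpleGraph.Walk.length_cons] at e1 ⊢
            exact e1
        _ = ((q2.length + 1 + 1 : ℕ) : ℕ∞) := by push_cast; ring
        _ ≤ ((max (q2.length + 1 + 1) 1 : ℕ) : ℕ∞) := Nat.cast_le.mpr (le_max_left _ _)

lemma anc_dh_le' (hexp : R.Expansive) {r : ℕ} {a w b w' : X}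
    (ha : R.Anc r a w) (hb : R.Anc r b w') {c : ℕ} (hc : R.dh w w' = (c : ℕ∞)) :
    R.dh a b ≤ ((max c 1 : ℕ) : ℕ∞) := by
  obtain ⟨p, hp⟩ := SimpleGraph.exists_walk_of_edist_eq_coe hc
  have h0 := R.walk_anc_dh hexp p ha hb
  rwa [hp] at h0

lemma anc_of_walk : ∀ {x u : X} (W : R.G.Walk x u), R.level u = R.level x + W.length →
    R.Anc W.length x u := by
  intro x u W
  induction W with
  | nil => intro _; exact Anc.refl _
  | @cons x σ u h W ih =>
    intro hlev
    rw [SimpleGraph.Walk.length_cons] at hlev ⊢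
    have h1 : R.level σ ≤ R.level x + 1 := R.level_adj h
    have h2 : R.level u ≤ R.level σ + W.length := by
      have ha := R.level_le σ u
      have hb := SimpleGraph.dist_le W
      omega
    have h3 : R.level σ = R.level x + 1 := by omega
    have h4 : R.Anc W.length σ u := ih (by omega)
    have h5 : σ ∈ R.J 1 x := ⟨h3, SimpleGraph.dist_eq_one_iff_adj.mpr h⟩
    have h6 : R.Anc 1 x σ := (Anc.refl x).step h5
    have h7 := Anc.trans R h4 h6
    rwa [Nat.add_comm] at h7

lemma anc_of_mem_J {m : ℕ} {x u : X} (h : u ∈ R.J m x) : R.Anc m x u := by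
  obtain ⟨W, hW⟩ := R.conn.exists_walk_length_eq_dist x u
  have h0 := R.anc_of_walk W (by rw [hW, h.2]; exact h.1)
  rwa [hW, h.2] at h0

lemma mem_J_of_anc {m : ℕ} {x u : X} (h : R.Anc m x u) : u ∈ R.J m x := by
  refine ⟨h.level_eq, ?_⟩
  have h1 := h.dist_le
  have h2 := R.level_le x u
  have h3 := h.level_eq
  omega

lemma walk_project (hexp : R.Expansive) {Λ : ℕ} :
    ∀ {w z : X} (W : R.G.Walk w z), R.level z = Λ →
      (∀ v ∈ W.support, Λ ≤ R.level v) →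
      ∃ b, R.Anc (R.level w - Λ) b w ∧
        R.dh z b + ((R.level w - Λ : ℕ) : ℕ∞) ≤ (W.length : ℕ∞) := by
  intro w z W
  induction W with
  | nil =>
    intro hz _
    exact ⟨_, by rw [hz, Nat.sub_self]; exact Anc.refl _,
      by rw [hz, Nat.sub_self, R.dh_self]; simp⟩
  | @cons w σ z h W ih =>
    intro hz hsup
    have hσsup : Λ ≤ R.level σ := hsup σ (by
      rw [SimpleGraph.Walk.support_cons]
      exact List.mem_cons_of_mem _ W.start_mem_support)
    have hwsup : Λ ≤ R.level w := hsup w (SimpleGraph.Walk.start_mem_support _)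
    obtain ⟨b₁, hb₁, hd₁⟩ := ih hz (fun v hv => hsup v (by
      rw [SimpleGraph.Walk.support_cons]; exact List.mem_cons_of_mem _ hv))
    have hA1 : R.level σ ≤ R.level w + 1 := R.level_adj h
    have hA2 : R.level w ≤ R.level σ + 1 := R.level_adj h.symm
    rw [SimpleGraph.Walk.length_cons]
    rcases Nat.lt_trichotomy (R.level w) (R.level σ) with hlt | heq | hgt
    · -- w is below σ : down-step
      have hσw : R.level σ = R.level w + 1 := by omega
      have hJ : σ ∈ R.J 1 w := ⟨hσw, SimpleGraph.dist_eq_one_iff_adj.mpr h⟩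
      have hr : R.level σ - Λ = (R.level w - Λ) + 1 := by omega
      rw [hr] at hb₁
      cases hb₁ with
      | @step _ _ σ₀ _ hb₁' hJ' =>
        have hlev0 : R.level σ₀ = R.level w := by
          have e1 := hJ'.1; have e2 := hJ.1; omega
        have hd0 : R.dh σ₀ w ≤ 1 :=
          R.parents_dh_le_one hexp hlev0 hJ' hJ (by rw [R.dh_self]; exact zero_le_one)
        obtain ⟨bw, hbw⟩ := R.exists_anc w (R.level w - Λ) (by omega)
        have hbb : R.dh b₁ bw ≤ 1 := R.anc_dh_le_one hexp hb₁' hbw hlev0 hd0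
        refine ⟨bw, hbw, ?_⟩
        calc R.dh z bw + ((R.level w - Λ : ℕ) : ℕ∞)
            ≤ (R.dh z b₁ + R.dh b₁ bw) + ((R.level w - Λ : ℕ) : ℕ∞) := by
              gcongr
              exact R.dh_triangle _ _ _
          _ ≤ (R.dh z b₁ + 1) + ((R.level w - Λ : ℕ) : ℕ∞) := by gcongr
          _ = R.dh z b₁ + (((R.level w - Λ) + 1 : ℕ) : ℕ∞) := by push_cast; ring
          _ = R.dh z b₁ + ((R.level σ - Λ : ℕ) : ℕ∞) := by rw [← hr]
          _ ≤ (W.length : ℕ∞) := hd₁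
          _ ≤ ((W.length + 1 : ℕ) : ℕ∞) := Nat.cast_le.mpr (by omega)
    · -- horizontal step
      have hgh : R.Gh.Adj w σ := ⟨h, heq⟩
      have hd0 : R.dh w σ ≤ 1 := le_of_eq (SimpleGraph.edist_eq_one_iff_adj.mpr hgh)
      obtain ⟨bw, hbw⟩ := R.exists_anc w (R.level w - Λ) (by omega)
      rw [show R.level σ - Λ = R.level w - Λ by omega] at hb₁
      have hbb : R.dh bw b₁ ≤ 1 := R.anc_dh_le_one hexp hbw hb₁ heq hd0
      refine ⟨bw, hbw, ?_⟩
      calc R.dh z bw + ((R.level w - Λ : ℕ) : ℕ∞)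
          ≤ (R.dh z b₁ + R.dh b₁ bw) + ((R.level w - Λ : ℕ) : ℕ∞) := by
            gcongr
            exact R.dh_triangle _ _ _
        _ ≤ (R.dh z b₁ + 1) + ((R.level w - Λ : ℕ) : ℕ∞) := by
            gcongr
            rw [R.dh_comm]; exact hbb
        _ = (R.dh z b₁ + ((R.level σ - Λ : ℕ) : ℕ∞)) + 1 := by
            rw [show R.level σ - Λ = R.level w - Λ by omega]; ring
        _ ≤ (W.length : ℕ∞) + 1 := by gcongr
        _ = ((W.length + 1 : ℕ) : ℕ∞) := by push_cast; ring
    · -- w is above σ : up-step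
      have hwσ : R.level w = R.level σ + 1 := by omega
      have hJ : w ∈ R.J 1 σ := ⟨hwσ, SimpleGraph.dist_eq_one_iff_adj.mpr h.symm⟩
      refine ⟨b₁, ?_, ?_⟩
      · have h0 := hb₁.step hJ
        rwa [show (R.level σ - Λ) + 1 = R.level w - Λ by omega] at h0
      · calc R.dh z b₁ + ((R.level w - Λ : ℕ) : ℕ∞)
            = R.dh z b₁ + (((R.level σ - Λ) + 1 : ℕ) : ℕ∞) := by
              rw [show R.level w - Λ = (R.level σ - Λ) + 1 by omega]
          _ = (R.dh z b₁ + ((R.level σ - Λ : ℕ) : ℕ∞)) + 1 := by push_cast; ring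
          _ ≤ (W.length : ℕ∞) + 1 := by gcongr
          _ = ((W.length + 1 : ℕ) : ℕ∞) := by push_cast; ring

lemma geodesic_split' (hexp : R.Expansive) (x y : X) :
    ∃ (Λ : ℕ) (a' b' : X), Λ ≤ R.level x ∧ Λ ≤ R.level y ∧
      R.Anc (R.level x - Λ) a' x ∧ R.Anc (R.level y - Λ) b' y ∧
      R.dh a' b' + ((R.level x - Λ : ℕ) : ℕ∞) + ((R.level y - Λ : ℕ) : ℕ∞)
        ≤ (R.G.dist x y : ℕ∞) := by
  classical
  obtain ⟨W, hW⟩ := R.conn.exists_walk_length_eq_dist x y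
  have hne : W.support ≠ [] := W.support_ne_nil
  rcases hargz : W.support.argmin R.level with _ | z
  · exact absurd (List.argmin_eq_none.mp hargz) hne
  have hzmem : z ∈ W.support := List.argmin_mem hargz
  have hmin : ∀ v ∈ W.support, R.level z ≤ R.level v :=
    fun v hv => List.le_of_mem_argmin hv hargz
  set Λ := R.level z with hΛ
  have hx : Λ ≤ R.level x := hmin x W.start_mem_support
  have hy : Λ ≤ R.level y := hmin y W.end_mem_support
  set W1 := W.takeUntil z hzmem with hW1
  set W2 := W.dropUntil z hzmem with hW2
  have hlensum : W1.length + W2.length = W.length := by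
    have h0 := congrArg SimpleGraph.Walk.length (W.take_spec hzmem)
    rwa [SimpleGraph.Walk.length_append] at h0
  obtain ⟨a', ha', hda⟩ := R.walk_project hexp W1 rfl
    (fun v hv => hmin v (SimpleGraph.Walk.support_takeUntil_subset W hzmem hv))
  obtain ⟨b', hb', hdb⟩ := R.walk_project hexp W2.reverse rfl
    (fun v hv => hmin v (SimpleGraph.Walk.support_dropUntil_subset W hzmem
      (by rwa [SimpleGraph.Walk.support_reverse, List.mem_reverse] at hv)))
  refine ⟨Λ, a', b', hx, hy, ha', hb', ?_⟩
  calc R.dh a' b' + ((R.level x - Λ : ℕ) : ℕ∞) + ((R.level y - Λ : ℕ) : ℕ∞)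
      ≤ (R.dh z a' + R.dh z b') + ((R.level x - Λ : ℕ) : ℕ∞) + ((R.level y - Λ : ℕ) : ℕ∞) := by
        gcongr
        rw [R.dh_comm z a']
        exact R.dh_triangle _ _ _
    _ = (R.dh z a' + ((R.level x - Λ : ℕ) : ℕ∞)) + (R.dh z b' + ((R.level y - Λ : ℕ) : ℕ∞)) := by
        ring
    _ ≤ (W1.length : ℕ∞) + (W2.reverse.length : ℕ∞) := add_le_add hda hdb
    _ = ((W1.length + W2.length : ℕ) : ℕ∞) := by
        rw [SimpleGraph.Walk.length_reverse]; push_cast; ring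
    _ = (R.G.dist x y : ℕ∞) := by rw [hlensum, hW]


lemma depAux (hexp : R.Expansive) {L : ℕ}
    (hL : ∀ x y : X, R.dh x y = (R.G.dist x y : ℕ∞) → R.dh x y ≤ (L : ℕ∞)) :
    ∀ j : ℕ, ∀ u v a b x y : X, j ≤ L + 1 →
      R.Anc (L + 1 - j) a u → R.Anc (L + 1 - j) b v →
      R.Anc (L + 1) x u → R.Anc (L + 1) y v →
      R.level x = R.level y → ((L + 2 : ℕ) : ℕ∞) < R.dh x y →
      R.dh a b ≤ ((2 * j + 2 : ℕ) : ℕ∞) → False := by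
  intro j
  induction j using Nat.strong_induction_on with
  | _ j ih =>
    intro u v a b x y hj ha hb hx hy hlxy hk hab
    have hlu : R.level u = R.level x + (L + 1) := hx.level_eq
    have hlv : R.level v = R.level y + (L + 1) := hy.level_eq
    have hla : R.level u = R.level a + (L + 1 - j) := ha.level_eq
    have hlb : R.level v = R.level b + (L + 1 - j) := hb.level_eq
    have hlab : R.level a = R.level b := by omega
    obtain ⟨a₀, ha₀⟩ := R.exists_anc a j (by omega)
    have hau : R.Anc (L + 1) a₀ u := by
      have h0 := Anc.trans R ha ha₀
      rwa [show j + (L + 1 - j) = L + 1 by omega] at h0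
    have hax : R.dh a₀ x ≤ 1 :=
      R.anc_dh_le_one hexp hau hx rfl (by rw [R.dh_self]; exact zero_le_one)
    by_cases hab0 : a = b
    · subst hab0
      have hav : R.Anc (L + 1) a₀ v := by
        have h0 := Anc.trans R hb ha₀
        rwa [show j + (L + 1 - j) = L + 1 by omega] at h0
      have hay : R.dh a₀ y ≤ 1 :=
        R.anc_dh_le_one hexp hav hy rfl (by rw [R.dh_self]; exact zero_le_one)
      have hxy : R.dh x y ≤ 2 := by
        calc R.dh x y ≤ R.dh x a₀ + R.dh a₀ y := R.dh_triangle _ _ _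
          _ ≤ 1 + 1 := by
              gcongr
              rw [R.dh_comm]; exact hax
          _ = 2 := by ring
      have h2k : (2 : ℕ∞) ≤ ((L + 2 : ℕ) : ℕ∞) := by exact_mod_cast (by omega : 2 ≤ L + 2)
      exact absurd hk (not_lt.mpr (hxy.trans h2k))
    · obtain ⟨b₀, hb₀⟩ := R.exists_anc b j (by omega)
      have hbv : R.Anc (L + 1) b₀ v := by
        have h0 := Anc.trans R hb hb₀
        rwa [show j + (L + 1 - j) = L + 1 by omega] at h0
      have hby : R.dh b₀ y ≤ 1 :=
        R.anc_dh_le_one hexp hbv hy rfl (by rw [R.dh_self]; exact zero_le_one)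
      obtain ⟨c, hc, hc2⟩ := R.dh_exists_nat hab
      have hc1 : 1 ≤ c := by
        by_contra h0
        have hc0 : c = 0 := by omega
        rw [hc0] at hc
        exact hab0 (SimpleGraph.edist_eq_zero_iff.mp
          (by rw [show R.Gh.edist a b = R.dh a b from rfl, hc]; simp))
      have hanch : R.dh a₀ b₀ ≤ (c : ℕ∞) := by
        have h0 := R.anc_dh_le' hexp ha₀ hb₀ hc
        rwa [Nat.max_eq_left hc1] at h0
      have hxy2 : R.dh x y ≤ (c : ℕ∞) + 2 := by
        calc R.dh x y ≤ R.dh x a₀ + R.dh a₀ y := R.dh_triangle _ _ _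
          _ ≤ R.dh x a₀ + (R.dh a₀ b₀ + R.dh b₀ y) := by
              gcongr
              exact R.dh_triangle _ _ _
          _ ≤ 1 + ((c : ℕ∞) + 1) := by
              gcongr
              rw [R.dh_comm]; exact hax
          _ = (c : ℕ∞) + 2 := by ring
      have hklt : ((L + 2 : ℕ) : ℕ∞) < ((c + 2 : ℕ) : ℕ∞) := by
        refine hk.trans_le (hxy2.trans (le_of_eq ?_))
        push_cast; ring
      have hcge : L + 1 ≤ c := by
        have h0 := Nat.cast_lt.mp hklt
        omega
      set d := R.G.dist a b with hd
      have hdist : d ≤ c := R.dist_le_dh_nat (le_of_eq hc)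
      have hneq : d ≠ c := by
        intro h0
        have he : R.dh a b = (d : ℕ∞) := by rw [hc, h0]
        have hle := hL a b he
        rw [hc] at hle
        have := Nat.cast_le.mp hle
        omega
      have hdlt : d + 1 ≤ c := by omega
      obtain ⟨Λ, a', b', hΛa, hΛb, ha', hb', hsplit⟩ := R.geodesic_split' hexp a b
      set h0 := R.level a - Λ with hh
      rw [show R.level b - Λ = h0 from by omega] at hsplit hb'
      have hfin : R.dh a' b' ≤ (d : ℕ∞) :=
        le_trans (le_self_add.trans le_self_add) hsplit
      obtain ⟨c', hc', hcd⟩ := R.dh_exists_nat hfin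
      rw [hc'] at hsplit
      have hnum : c' + h0 + h0 ≤ d := by exact_mod_cast hsplit
      by_cases hh0 : h0 = 0
      · rw [hh0] at ha' hb'
        cases ha'
        cases hb'
        rw [hc] at hc'
        have : c = c' := Nat.cast_inj.mp hc'
        omega
      · have hhj : h0 ≤ j := by
          by_contra hgt
          omega
        have hj' : j - h0 < j := by omega
        refine ih (j - h0) hj' u v a' b' x y (by omega) ?_ ?_ hx hy hlxy hk ?_
        · have ht := Anc.trans R ha ha'
          rwa [show h0 + (L + 1 - j) = L + 1 - (j - h0) by omega] at ht
        · have ht := Anc.trans R hb hb'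
          rwa [show h0 + (L + 1 - j) = L + 1 - (j - h0) by omega] at ht
        · rw [hc']
          exact Nat.cast_le.mpr (by omega)

lemma departing_of_bounded (hexp : R.Expansive) {L : ℕ}
    (hL : ∀ x y : X, R.dh x y = (R.G.dist x y : ℕ∞) → R.dh x y ≤ (L : ℕ∞)) :
    R.Departing (L + 1) (L + 2) := by
  intro x y hlev hk u hu v hv
  by_contra hle
  have hle' : R.dh u v ≤ ((2 * (L + 1) + 2 : ℕ) : ℕ∞) := by
    have h0 := not_lt.mp hle
    rwa [show 2 * (L + 2) = 2 * (L + 1) + 2 by ring] at h0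
  exact R.depAux hexp hL (L + 1) u v u v x y le_rfl
    (by rw [Nat.sub_self]; exact Anc.refl u) (by rw [Nat.sub_self]; exact Anc.refl v)
    (R.anc_of_mem_J hu) (R.anc_of_mem_J hv) hlev hk hle'


lemma root_anc (x : X) : R.Anc (R.level x) R.root x := by
  obtain ⟨a, ha⟩ := R.exists_anc x (R.level x) le_rfl
  have h0 : R.level a = 0 := by have := ha.level_eq; omega
  rwa [R.eq_root_of_level_eq_zero h0] at ha

/-- The confluence level of two vertices. -/
def Tlevel (k : ℕ) (x y : X) : ℕ :=
  sSup {Λ | Λ ≤ R.level x ∧ Λ ≤ R.level y ∧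
    ∃ a b, R.Anc (R.level x - Λ) a x ∧ R.Anc (R.level y - Λ) b y ∧ R.dh a b ≤ (k : ℕ∞)}

lemma Tlevel_bddAbove (k : ℕ) (x y : X) :
    BddAbove {Λ | Λ ≤ R.level x ∧ Λ ≤ R.level y ∧
      ∃ a b, R.Anc (R.level x - Λ) a x ∧ R.Anc (R.level y - Λ) b y ∧ R.dh a b ≤ (k : ℕ∞)} :=
  ⟨R.level x, fun _ hΛ => hΛ.1⟩

lemma Tlevel_spec (k : ℕ) (x y : X) :
    R.Tlevel k x y ≤ R.level x ∧ R.Tlevel k x y ≤ R.level y ∧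
      ∃ a b, R.Anc (R.level x - R.Tlevel k x y) a x ∧
        R.Anc (R.level y - R.Tlevel k x y) b y ∧ R.dh a b ≤ (k : ℕ∞) := by
  have hne : {Λ | Λ ≤ R.level x ∧ Λ ≤ R.level y ∧
      ∃ a b, R.Anc (R.level x - Λ) a x ∧ R.Anc (R.level y - Λ) b y ∧
        R.dh a b ≤ (k : ℕ∞)}.Nonempty := by
    refine ⟨0, Nat.zero_le _, Nat.zero_le _, R.root, R.root, ?_, ?_, ?_⟩
    · rw [Nat.sub_zero]; exact R.root_anc x
    · rw [Nat.sub_zero]; exact R.root_anc y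
    · rw [R.dh_self]; exact zero_le
  exact Nat.sSup_mem hne (R.Tlevel_bddAbove k x y)

lemma le_Tlevel {k : ℕ} {x y : X} {Λ : ℕ} (h1 : Λ ≤ R.level x) (h2 : Λ ≤ R.level y)
    {a b : X} (ha : R.Anc (R.level x - Λ) a x) (hb : R.Anc (R.level y - Λ) b y)
    (hd : R.dh a b ≤ (k : ℕ∞)) : Λ ≤ R.Tlevel k x y :=
  le_csSup (R.Tlevel_bddAbove k x y) ⟨h1, h2, a, b, ha, hb, hd⟩

lemma qAux (hexp : R.Expansive) {L : ℕ}
    (hL : ∀ x y : X, R.dh x y = (R.G.dist x y : ℕ∞) → R.dh x y ≤ (L : ℕ∞)) (x y : X) :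
    ∀ e : ℕ, 1 ≤ e → ∀ a b : X,
      R.Anc (R.level x - (R.Tlevel (L + 2) x y + e)) a x →
      R.Anc (R.level y - (R.Tlevel (L + 2) x y + e)) b y →
      R.Tlevel (L + 2) x y + e ≤ R.level x → R.Tlevel (L + 2) x y + e ≤ R.level y →
      R.dh a b ≤ ((2 * e : ℕ) : ℕ∞) → False := by
  intro e
  induction e using Nat.strong_induction_on with
  | _ e ih =>
    intro he a b ha hb hex hey hab
    have hla : R.level a = R.Tlevel (L + 2) x y + e := by
      have := ha.level_eq; omega
    have hlb : R.level b = R.Tlevel (L + 2) x y + e := by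
      have := hb.level_eq; omega
    have hgt : ((L + 2 : ℕ) : ℕ∞) < R.dh a b := by
      by_contra hle0
      have hmem := R.le_Tlevel hex hey ha hb (not_lt.mp hle0)
      omega
    obtain ⟨c, hc, hc2⟩ := R.dh_exists_nat hab
    have hcge : L + 2 + 1 ≤ c := by
      rw [hc] at hgt
      have := Nat.cast_lt.mp hgt
      omega
    set d := R.G.dist a b with hd
    have hdist : d ≤ c := R.dist_le_dh_nat (le_of_eq hc)
    have hneq : d ≠ c := by
      intro h0
      have he2 : R.dh a b = (d : ℕ∞) := by rw [hc, h0]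
      have hle2 := hL a b he2
      rw [hc] at hle2
      have := Nat.cast_le.mp hle2
      omega
    have hdlt : d + 1 ≤ c := by omega
    obtain ⟨Λ, a', b', hΛa, hΛb, ha', hb', hsplit⟩ := R.geodesic_split' hexp a b
    set h0 := R.level a - Λ with hh
    rw [show R.level b - Λ = h0 from by omega] at hsplit hb'
    have hfin : R.dh a' b' ≤ (d : ℕ∞) :=
      le_trans (le_self_add.trans le_self_add) hsplit
    obtain ⟨c', hc', hcd⟩ := R.dh_exists_nat hfin
    rw [hc'] at hsplit
    have hnum : c' + h0 + h0 ≤ d := by exact_mod_cast hsplit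
    by_cases hh0 : h0 = 0
    · rw [hh0] at ha' hb'
      cases ha'
      cases hb'
      rw [hc] at hc'
      have : c = c' := Nat.cast_inj.mp hc'
      omega
    · have hhe : h0 < e := by
        by_contra hge
        omega
      have hT : R.Tlevel (L + 2) x y + e ≤ R.level a := by omega
      refine ih (e - h0) (by omega) (by omega) a' b' ?_ ?_ (by omega) (by omega) ?_
      · have ht := Anc.trans R ha ha'
        rwa [show h0 + (R.level x - (R.Tlevel (L + 2) x y + e))
            = R.level x - (R.Tlevel (L + 2) x y + (e - h0)) by omega] at ht
      · have ht := Anc.trans R hb hb'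
        rwa [show h0 + (R.level y - (R.Tlevel (L + 2) x y + e))
            = R.level y - (R.Tlevel (L + 2) x y + (e - h0)) by omega] at ht
      · rw [hc']
        exact Nat.cast_le.mpr (by omega)

lemma dist_near_T (hexp : R.Expansive) {L : ℕ}
    (hL : ∀ x y : X, R.dh x y = (R.G.dist x y : ℕ∞) → R.dh x y ≤ (L : ℕ∞)) (x y : X) :
    R.level x + R.level y ≤ R.G.dist x y + 2 * R.Tlevel (L + 2) x y ∧
    R.G.dist x y + 2 * R.Tlevel (L + 2) x y ≤ R.level x + R.level y + (L + 2) := by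
  obtain ⟨h1x, h1y, a, b, ha, hb, hdab⟩ := R.Tlevel_spec (L + 2) x y
  constructor
  · -- lower bound on dist
    obtain ⟨Λ, a', b', hΛx, hΛy, ha', hb', hsplit⟩ := R.geodesic_split' hexp x y
    by_cases hcase : Λ ≤ R.Tlevel (L + 2) x y
    · have hnat : (R.level x - Λ) + (R.level y - Λ) ≤ R.G.dist x y := by
        have h0 : ((R.level x - Λ : ℕ) : ℕ∞) + ((R.level y - Λ : ℕ) : ℕ∞)
            ≤ (R.G.dist x y : ℕ∞) := by
          refine le_trans ?_ hsplit
          calc ((R.level x - Λ : ℕ) : ℕ∞) + ((R.level y - Λ : ℕ) : ℕ∞)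
              ≤ R.dh a' b' + (((R.level x - Λ : ℕ) : ℕ∞) + ((R.level y - Λ : ℕ) : ℕ∞)) :=
                le_add_self
            _ = R.dh a' b' + ((R.level x - Λ : ℕ) : ℕ∞) + ((R.level y - Λ : ℕ) : ℕ∞) := by
                ring
        exact_mod_cast h0
      omega
    · -- the geodesic stays above T : big horizontal distance at the bottom
      set e := Λ - R.Tlevel (L + 2) x y with he
      have he1 : 1 ≤ e := by omega
      have hfin : R.dh a' b' ≤ (R.G.dist x y : ℕ∞) :=
        le_trans (le_self_add.trans le_self_add) hsplit
      obtain ⟨c', hc', hcd⟩ := R.dh_exists_nat hfin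
      have hgt : ¬ (R.dh a' b' ≤ ((2 * e : ℕ) : ℕ∞)) := by
        intro hcon
        refine R.qAux hexp hL x y e he1 a' b' ?_ ?_ (by omega) (by omega) hcon
        · rwa [show R.level x - (R.Tlevel (L + 2) x y + e) = R.level x - Λ by omega]
        · rwa [show R.level y - (R.Tlevel (L + 2) x y + e) = R.level y - Λ by omega]
      have hcge : 2 * e + 1 ≤ c' := by
        by_contra hcon2
        apply hgt
        rw [hc']
        exact Nat.cast_le.mpr (by omega)
      rw [hc'] at hsplit
      have hnum : c' + (R.level x - Λ) + (R.level y - Λ) ≤ R.G.dist x y := by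
        exact_mod_cast hsplit
      omega
  · -- upper bound on dist
    have hd1 : R.G.dist x a ≤ R.level x - R.Tlevel (L + 2) x y := by
      have h0 := ha.dist_le
      rwa [SimpleGraph.dist_comm] at h0
    have hd2 : R.G.dist b y ≤ R.level y - R.Tlevel (L + 2) x y := hb.dist_le
    have hdab' : R.G.dist a b ≤ L + 2 := R.dist_le_dh_nat hdab
    have tri1 : R.G.dist x y ≤ R.G.dist x a + R.G.dist a y := R.conn.dist_triangle
    have tri2 : R.G.dist a y ≤ R.G.dist a b + R.G.dist b y := R.conn.dist_triangle
    omega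

lemma Tlevel_ultra (hexp : R.Expansive) {L : ℕ}
    (hL : ∀ x y : X, R.dh x y = (R.G.dist x y : ℕ∞) → R.dh x y ≤ (L : ℕ∞)) (x y z : X) :
    min (R.Tlevel (L + 2) x z) (R.Tlevel (L + 2) z y) ≤ R.Tlevel (L + 2) x y + (L + 2) := by
  set T1 := R.Tlevel (L + 2) x z with hT1
  set T2 := R.Tlevel (L + 2) z y with hT2
  set Λ := min T1 T2 with hΛ
  obtain ⟨h1x, h1z, a1, c1, ha1, hc1, hd1⟩ := R.Tlevel_spec (L + 2) x z
  obtain ⟨h2z, h2y, c2, b2, hc2, hb2, hd2⟩ := R.Tlevel_spec (L + 2) z y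
  -- descend the first pair to level Λ
  have hla1 : R.level a1 = T1 := by have := ha1.level_eq; omega
  have hlc1 : R.level c1 = T1 := by have := hc1.level_eq; omega
  have hlc2 : R.level c2 = T2 := by have := hc2.level_eq; omega
  have hlb2 : R.level b2 = T2 := by have := hb2.level_eq; omega
  obtain ⟨a1', ha1'⟩ := R.exists_anc a1 (T1 - Λ) (by omega)
  obtain ⟨c1', hc1'⟩ := R.exists_anc c1 (T1 - Λ) (by omega)
  obtain ⟨c2', hc2'⟩ := R.exists_anc c2 (T2 - Λ) (by omega)
  obtain ⟨b2', hb2'⟩ := R.exists_anc b2 (T2 - Λ) (by omega)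
  have hAx : R.Anc (R.level x - Λ) a1' x := by
    have ht := Anc.trans R ha1 ha1'
    rwa [show (T1 - Λ) + (R.level x - T1) = R.level x - Λ by omega] at ht
  have hAz1 : R.Anc (R.level z - Λ) c1' z := by
    have ht := Anc.trans R hc1 hc1'
    rwa [show (T1 - Λ) + (R.level z - T1) = R.level z - Λ by omega] at ht
  have hAz2 : R.Anc (R.level z - Λ) c2' z := by
    have ht := Anc.trans R hc2 hc2'
    rwa [show (T2 - Λ) + (R.level z - T2) = R.level z - Λ by omega] at ht
  have hAy : R.Anc (R.level y - Λ) b2' y := by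
    have ht := Anc.trans R hb2 hb2'
    rwa [show (T2 - Λ) + (R.level y - T2) = R.level y - Λ by omega] at ht
  -- dh bounds
  obtain ⟨k1, hk1, hk1le⟩ := R.dh_exists_nat hd1
  obtain ⟨k2, hk2, hk2le⟩ := R.dh_exists_nat hd2
  have hdh1 : R.dh a1' c1' ≤ ((L + 2 : ℕ) : ℕ∞) := by
    have h0 := R.anc_dh_le' hexp ha1' hc1' hk1
    exact h0.trans (Nat.cast_le.mpr (by omega))
  have hdh2 : R.dh c2' b2' ≤ ((L + 2 : ℕ) : ℕ∞) := by
    have h0 := R.anc_dh_le' hexp hc2' hb2' hk2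
    exact h0.trans (Nat.cast_le.mpr (by omega))
  have hdhz : R.dh c1' c2' ≤ 1 :=
    R.anc_dh_le_one hexp hAz1 hAz2 rfl (by rw [R.dh_self]; exact zero_le_one)
  have htot : R.dh a1' b2' ≤ ((2 * (L + 2) + 1 : ℕ) : ℕ∞) := by
    calc R.dh a1' b2' ≤ R.dh a1' c1' + R.dh c1' b2' := R.dh_triangle _ _ _
      _ ≤ R.dh a1' c1' + (R.dh c1' c2' + R.dh c2' b2') := by
          gcongr
          exact R.dh_triangle _ _ _
      _ ≤ ((L + 2 : ℕ) : ℕ∞) + (1 + ((L + 2 : ℕ) : ℕ∞)) := by gcongr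
      _ = ((2 * (L + 2) + 1 : ℕ) : ℕ∞) := by push_cast; ring
  by_contra hcon
  have he1 : R.Tlevel (L + 2) x y + (L + 2) + 1 ≤ Λ := by omega
  set e := Λ - R.Tlevel (L + 2) x y with he
  refine R.qAux hexp hL x y e (by omega) a1' b2' ?_ ?_ (by omega) (by omega) ?_
  · rwa [show R.level x - (R.Tlevel (L + 2) x y + e) = R.level x - Λ by omega]
  · rwa [show R.level y - (R.Tlevel (L + 2) x y + e) = R.level y - Λ by omega]
  · refine htot.trans (Nat.cast_le.mpr (by omega))

lemma hyperbolic_of_bounded (hexp : R.Expansive) {L : ℕ}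
    (hL : ∀ x y : X, R.dh x y = (R.G.dist x y : ℕ∞) → R.dh x y ≤ (L : ℕ∞)) :
    R.Hyperbolic := by
  refine ⟨3 * (L + 2) / 2, by positivity, ?_⟩
  intro x y z
  have key : ∀ a b : X, (R.Tlevel (L + 2) a b : ℝ) - (L + 2) / 2 ≤ R.gp a b ∧
      R.gp a b ≤ (R.Tlevel (L + 2) a b : ℝ) := by
    intro a b
    obtain ⟨h1, h2⟩ := R.dist_near_T hexp hL a b
    have h1' : (R.level a : ℝ) + R.level b ≤ R.G.dist a b + 2 * R.Tlevel (L + 2) a b := by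
      exact_mod_cast h1
    have h2' : (R.G.dist a b : ℝ) + 2 * R.Tlevel (L + 2) a b
        ≤ R.level a + R.level b + (L + 2) := by
      exact_mod_cast h2
    simp only [RootedGraph.gp]
    constructor <;> [linarith; linarith]
  obtain ⟨k1a, k1b⟩ := key x z
  obtain ⟨k2a, k2b⟩ := key z y
  obtain ⟨k3a, k3b⟩ := key x y
  have hu := R.Tlevel_ultra hexp hL x y z
  have hu' : min ((R.Tlevel (L + 2) x z : ℝ)) ((R.Tlevel (L + 2) z y : ℝ))
      ≤ (R.Tlevel (L + 2) x y : ℝ) + (L + 2) := by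
    have : ((min (R.Tlevel (L + 2) x z) (R.Tlevel (L + 2) z y) : ℕ) : ℝ)
        ≤ ((R.Tlevel (L + 2) x y + (L + 2) : ℕ) : ℝ) := Nat.cast_le.mpr hu
    push_cast at this
    simpa using this
  have hmin : min (R.gp x z) (R.gp z y)
      ≤ min ((R.Tlevel (L + 2) x z : ℝ)) ((R.Tlevel (L + 2) z y : ℝ)) :=
    min_le_min k1b k2b
  linarith [min_le_left (R.gp x z) (R.gp z y)]


lemma bounded_of_hyperbolic (hhyp : R.Hyperbolic) :
    ∃ L : ℕ, ∀ x y : X, R.dh x y = (R.G.dist x y : ℕ∞) → R.dh x y ≤ (L : ℕ∞) := by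
  obtain ⟨δ, hδ0, hδ⟩ := hhyp
  refine ⟨⌈4 * δ + 1⌉₊, ?_⟩
  intro x y hxy
  set ℓ := R.G.dist x y with hℓ
  obtain ⟨W, hW⟩ := SimpleGraph.exists_walk_of_edist_eq_coe (G := R.Gh) hxy
  set p := (ℓ + 1) / 2 with hp
  have hpl : p ≤ ℓ := by omega
  have hp2 : ℓ ≤ 2 * p := by omega
  have hp3 : 2 * p ≤ ℓ + 1 := by omega
  set z := W.getVert p with hz
  have hdxz : R.dh x z ≤ (p : ℕ∞) := by
    have h0 := edist_getVert_le (G := R.Gh) W 0 p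
    rwa [W.getVert_zero, Nat.zero_add] at h0
  have hdzy : R.dh z y ≤ ((ℓ - p : ℕ) : ℕ∞) := by
    have h0 := edist_getVert_le (G := R.Gh) W p (ℓ - p)
    rw [show p + (ℓ - p) = W.length by omega, W.getVert_length] at h0
    exact h0
  have hdistxz : R.G.dist x z ≤ p := R.dist_le_dh_nat hdxz
  have hdistzy : R.G.dist z y ≤ ℓ - p := R.dist_le_dh_nat hdzy
  have htri : ℓ ≤ R.G.dist x z + R.G.dist z y := R.conn.dist_triangle
  have hdxz' : R.G.dist x z = p := by omega
  have hdzy' : R.G.dist z y = ℓ - p := by omega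
  have hlevz : R.level z = R.level x := R.gh_walk_support_level W z (by
    rw [SimpleGraph.Walk.mem_support_iff_exists_getVert]
    exact ⟨p, rfl, by omega⟩)
  have hlevy : R.level y = R.level x := (R.gh_walk_level W).symm
  have hcast : ((ℓ - p : ℕ) : ℝ) = (ℓ : ℝ) - p := by
    push_cast [Nat.cast_sub hpl]; ring
  have egxz : R.gp x z = ((R.level x : ℝ) + R.level x - p) / 2 := by
    simp only [RootedGraph.gp, hlevz, hdxz']
  have egzy : R.gp z y = ((R.level x : ℝ) + R.level x - ((ℓ - p : ℕ) : ℝ)) / 2 := by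
    simp only [RootedGraph.gp, hlevz, hlevy, hdzy']
  have egxy : R.gp x y = ((R.level x : ℝ) + R.level x - (ℓ : ℝ)) / 2 := by
    simp only [RootedGraph.gp, hlevy, ← hℓ]
  have hmono : R.gp x z ≤ R.gp z y := by
    rw [egxz, egzy, hcast]
    have h0 : (ℓ : ℝ) ≤ 2 * p := by exact_mod_cast hp2
    linarith
  have hmain := hδ x y z
  rw [min_eq_left hmono, egxz, egxy] at hmain
  have hpr : (p : ℝ) ≤ ((ℓ : ℝ) + 1) / 2 := by
    have h0 : (2 * p : ℝ) ≤ (ℓ : ℝ) + 1 := by exact_mod_cast hp3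
    linarith
  have hfin : (ℓ : ℝ) ≤ 4 * δ + 1 := by linarith
  have hceil : (ℓ : ℝ) ≤ ((⌈4 * δ + 1⌉₊ : ℕ) : ℝ) := hfin.trans (Nat.le_ceil _)
  have hnat : ℓ ≤ ⌈4 * δ + 1⌉₊ := by exact_mod_cast hceil
  rw [hxy]
  exact_mod_cast Nat.cast_le.mpr hnat


lemma two_mul_add_one_le_two_pow {t : ℕ} (h : 3 ≤ t) : 2 * t + 1 ≤ 2 ^ t := by
  induction t, h using Nat.le_induction with
  | base => norm_num
  | succ t ht ih =>
    have h2 : (2:ℕ) ≤ 2 ^ t := by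
      calc (2:ℕ) = 2 ^ 1 := by norm_num
        _ ≤ 2 ^ t := Nat.pow_le_pow_right (by norm_num) (by omega)
    calc 2 * (t + 1) + 1 = (2 * t + 1) + 2 := by ring
      _ ≤ 2 ^ t + 2 ^ t := by omega
      _ = 2 ^ (t + 1) := by ring

lemma sq_le_two_pow' {t : ℕ} (h : 4 ≤ t) : t * t ≤ 2 ^ t := by
  induction t, h using Nat.le_induction with
  | base => norm_num
  | succ t ht ih =>
    have h1 := two_mul_add_one_le_two_pow (t := t) (by omega)
    calc (t + 1) * (t + 1) = t * t + (2 * t + 1) := by ring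
      _ ≤ 2 ^ t + 2 ^ t := by omega
      _ = 2 ^ (t + 1) := by ring

lemma exists_pow_big (a b : ℕ) : ∃ t : ℕ, a * t + b < 2 ^ t := by
  refine ⟨max 4 (a + b + 1), ?_⟩
  set t := max 4 (a + b + 1) with ht
  have h4 : 4 ≤ t := le_max_left _ _
  have hab : a + b + 1 ≤ t := le_max_right _ _
  have h1 : a * t + b < (a + 1) * t := by
    have hbt : b < t := by omega
    calc a * t + b < a * t + t := by omega
      _ = (a + 1) * t := by ring
  have h2 : (a + 1) * t ≤ t * t := Nat.mul_le_mul_right t (by omega)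
  exact lt_of_lt_of_le h1 (h2.trans (sq_le_two_pow' h4))

/-- A fixed choice of parent. -/
noncomputable def par (x : X) : X :=
  if h : 1 ≤ R.level x then (R.exists_parent h).choose else x

lemma par_spec {x : X} (h : 1 ≤ R.level x) : x ∈ R.J 1 (R.par x) := by
  rw [RootedGraph.par, dif_pos h]
  exact (R.exists_parent h).choose_spec

/-- Iterated parents. -/
noncomputable def ancIter (r : ℕ) (x : X) : X := R.par^[r] x

lemma ancIter_anc : ∀ (r : ℕ) (x : X), r ≤ R.level x → R.Anc r (R.ancIter r x) x := by
  intro r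
  induction r with
  | zero => intro x _; exact Anc.refl x
  | succ r ih =>
    intro x h
    have h1 : 1 ≤ R.level x := by omega
    have hp := R.par_spec h1
    have hlev : R.level x = R.level (R.par x) + 1 := hp.1
    have h2 : r ≤ R.level (R.par x) := by omega
    have h4 := (ih (R.par x) h2).step hp
    rwa [show R.ancIter r (R.par x) = R.ancIter (r + 1) x
      from (Function.iterate_succ_apply R.par r x).symm] at h4

lemma ancIter_add (r s : ℕ) (x : X) : R.ancIter (r + s) x = R.ancIter r (R.ancIter s x) :=
  Function.iterate_add_apply R.par r s x

lemma level_ancIter {r : ℕ} {x : X} (h : r ≤ R.level x) :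
    R.level (R.ancIter r x) = R.level x - r := by
  have := (R.ancIter_anc r x h).level_eq
  omega

lemma dblAux (hexp : R.Expansive) {m k : ℕ} (hm : 0 < m) (hk : 0 < k)
    (hdep : R.Departing m k) {x y : X} (W : R.Gh.Walk x y) :
    ∀ t : ℕ, t * m ≤ R.level x → ∀ i j : ℕ, i ≤ j → j ≤ W.length → j - i ≤ 2 ^ t * k →
      R.dh (R.ancIter (t * m) (W.getVert i)) (R.ancIter (t * m) (W.getVert j)) ≤ (k : ℕ∞) := by
  have hlv : ∀ s : ℕ, s ≤ W.length → R.level (W.getVert s) = R.level x := fun s hs =>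
    R.gh_walk_support_level W _ (by
      rw [SimpleGraph.Walk.mem_support_iff_exists_getVert]; exact ⟨s, rfl, hs⟩)
  intro t
  induction t with
  | zero =>
    intro _ i j hij hj hd
    simp only [Nat.zero_mul, RootedGraph.ancIter, Function.iterate_zero, id_eq]
    have h0 := edist_getVert_le (G := R.Gh) W i (j - i)
    rw [show i + (j - i) = j by omega] at h0
    exact h0.trans (Nat.cast_le.mpr (by simpa using hd))
  | succ t ih =>
    intro hlev i j hij hj hd
    have hmul : (t + 1) * m = t * m + m := by ring
    set r := (i + j) / 2 with hr
    have hir : i ≤ r := by omega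
    have hrj : r ≤ j := by omega
    have hpow : 2 ^ (t + 1) * k = 2 ^ t * k + 2 ^ t * k := by ring
    have hd1 : r - i ≤ 2 ^ t * k := by omega
    have hd2 : j - r ≤ 2 ^ t * k := by omega
    have hlev' : t * m ≤ R.level x := by omega
    have h1 := ih hlev' i r hir (by omega) hd1
    have h2 := ih hlev' r j hrj hj hd2
    set Ai := R.ancIter (t * m) (W.getVert i) with hAi
    set Aj := R.ancIter (t * m) (W.getVert j) with hAj
    have htmi : t * m ≤ R.level (W.getVert i) := by rw [hlv i (by omega)]; exact hlev'
    have htmj : t * m ≤ R.level (W.getVert j) := by rw [hlv j (by omega)]; exact hlev'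
    have hlAi : R.level Ai = R.level x - t * m := by
      rw [hAi, R.level_ancIter htmi, hlv i (by omega)]
    have hlAj : R.level Aj = R.level x - t * m := by
      rw [hAj, R.level_ancIter htmj, hlv j (by omega)]
    have hmAi : m ≤ R.level Ai := by omega
    have hmAj : m ≤ R.level Aj := by omega
    have hxAi : Ai ∈ R.J m (R.ancIter m Ai) := R.mem_J_of_anc (R.ancIter_anc m Ai hmAi)
    have hyAj : Aj ∈ R.J m (R.ancIter m Aj) := R.mem_J_of_anc (R.ancIter_anc m Aj hmAj)
    have hleveq : R.level (R.ancIter m Ai) = R.level (R.ancIter m Aj) := by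
      rw [R.level_ancIter hmAi, R.level_ancIter hmAj, hlAi, hlAj]
    have hAiAj : R.dh Ai Aj ≤ ((2 * k : ℕ) : ℕ∞) := by
      calc R.dh Ai Aj ≤ R.dh Ai (R.ancIter (t * m) (W.getVert r)) +
            R.dh (R.ancIter (t * m) (W.getVert r)) Aj := R.dh_triangle _ _ _
        _ ≤ (k : ℕ∞) + (k : ℕ∞) := add_le_add h1 h2
        _ = ((2 * k : ℕ) : ℕ∞) := by push_cast; ring
    have hcon : R.dh (R.ancIter m Ai) (R.ancIter m Aj) ≤ (k : ℕ∞) := by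
      by_contra hgt
      have hbig := hdep _ _ hleveq (not_le.mp hgt) Ai hxAi Aj hyAj
      exact absurd hAiAj (not_le.mpr hbig)
    rw [show (t + 1) * m = m + t * m by ring, R.ancIter_add m (t * m) (W.getVert i),
      R.ancIter_add m (t * m) (W.getVert j)]
    exact hcon

lemma bounded_of_departing (hexp : R.Expansive) {m k : ℕ} (hm : 0 < m) (hk : 0 < k)
    (hdep : R.Departing m k) :
    ∃ L : ℕ, ∀ x y : X, R.dh x y = (R.G.dist x y : ℕ∞) → R.dh x y ≤ (L : ℕ∞) := by
  obtain ⟨t, ht⟩ := exists_pow_big (2 * m) k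
  refine ⟨2 ^ t * k + 2 * t * m, ?_⟩
  intro x y hxy
  set ℓ := R.G.dist x y with hℓ
  obtain ⟨W, hW⟩ := SimpleGraph.exists_walk_of_edist_eq_coe (G := R.Gh) hxy
  suffices h : ℓ ≤ 2 ^ t * k + 2 * t * m by
    rw [hxy]
    exact Nat.cast_le.mpr h
  have hlxy : R.level y = R.level x := (R.gh_walk_level W).symm
  by_cases hn : t * m ≤ R.level x
  · set jj := min ℓ (2 ^ t * k) with hjj
    have hdh := R.dblAux hexp hm hk hdep W t hn 0 jj (by omega) (by omega) (by omega)
    rw [W.getVert_zero] at hdh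
    set wj := W.getVert jj with hwj
    have hljj : R.level wj = R.level x := R.gh_walk_support_level W _ (by
      rw [SimpleGraph.Walk.mem_support_iff_exists_getVert]; exact ⟨jj, rfl, by omega⟩)
    have hA0 := R.ancIter_anc (t * m) x hn
    have hAj := R.ancIter_anc (t * m) wj (by rw [hljj]; exact hn)
    have d1 : R.G.dist x (R.ancIter (t * m) x) ≤ t * m := by
      have h0 := hA0.dist_le
      rwa [SimpleGraph.dist_comm] at h0
    have d2 : R.G.dist (R.ancIter (t * m) x) (R.ancIter (t * m) wj) ≤ k :=
      R.dist_le_dh_nat hdh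
    have d3 : R.G.dist (R.ancIter (t * m) wj) wj ≤ t * m := hAj.dist_le
    have tri1 : R.G.dist x wj ≤ R.G.dist x (R.ancIter (t * m) x) +
        R.G.dist (R.ancIter (t * m) x) wj := R.conn.dist_triangle
    have tri2 : R.G.dist (R.ancIter (t * m) x) wj ≤
        R.G.dist (R.ancIter (t * m) x) (R.ancIter (t * m) wj) +
        R.G.dist (R.ancIter (t * m) wj) wj := R.conn.dist_triangle
    have hup : R.G.dist x wj ≤ t * m + k + t * m := by omega
    have h1 : R.dh wj y ≤ ((ℓ - jj : ℕ) : ℕ∞) := by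
      have h0 := edist_getVert_le (G := R.Gh) W jj (W.length - jj)
      rw [show jj + (W.length - jj) = W.length by omega, W.getVert_length] at h0
      exact h0.trans (Nat.cast_le.mpr (by omega))
    have h2 : R.G.dist wj y ≤ ℓ - jj := R.dist_le_dh_nat h1
    have h3 : ℓ ≤ R.G.dist x wj + R.G.dist wj y := R.conn.dist_triangle
    have hlow : jj ≤ R.G.dist x wj := by omega
    have hjle : jj ≤ t * m + k + t * m := by omega
    have hkk : 2 ^ t ≤ 2 ^ t * k := Nat.le_mul_of_pos_right _ hk
    have e1 : 2 * m * t = 2 * (t * m) := by ring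
    have e2 : 2 * t * m = 2 * (t * m) := by ring
    have ht' : 2 * (t * m) + k < 2 ^ t * k := by
      calc 2 * (t * m) + k = 2 * m * t + k := by ring
        _ < 2 ^ t := ht
        _ ≤ 2 ^ t * k := hkk
    have hcase : ℓ ≤ 2 ^ t * k := by
      by_contra hbig
      omega
    omega
  · have h1 : ℓ ≤ R.level x + R.level y := by
      have h0 : R.G.dist x y ≤ R.G.dist x R.root + R.G.dist R.root y := R.conn.dist_triangle
      rw [SimpleGraph.dist_comm (u := x) (v := R.root)] at h0
      exact h0
    have hkk : 2 ^ t ≤ 2 ^ t * k := Nat.le_mul_of_pos_right _ hk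
    have e2 : 2 * t * m = 2 * (t * m) := by ring
    omega


end RootedGraph

end AuxHyp


/-- Theorem 2.11: for an expansive rooted graph, hyperbolicity, a uniform
bound on horizontal geodesics, and the `(m,k)`-departing property are all equivalent;
moreover a bound `L` on horizontal geodesics yields the `(L+1,L+2)`-departing property. -/
theorem expansive_hyperbolic_tfae {X : Type*} (R : RootedGraph X) (hexp : R.Expansive) :
    (R.Hyperbolic ↔
      ∃ L : ℕ, ∀ x y : X, R.dh x y = (R.G.dist x y : ℕ∞) → R.dh x y ≤ (L : ℕ∞)) ∧
    (R.Hyperbolic ↔ ∃ m k : ℕ, 0 < m ∧ 0 < k ∧ R.Departing m k) ∧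
    (∀ L : ℕ, (∀ x y : X, R.dh x y = (R.G.dist x y : ℕ∞) → R.dh x y ≤ (L : ℕ∞)) →
      R.Departing (L + 1) (L + 2)) := by
  have hpart3 : ∀ L : ℕ, (∀ x y : X, R.dh x y = (R.G.dist x y : ℕ∞) → R.dh x y ≤ (L : ℕ∞)) →
      R.Departing (L + 1) (L + 2) := fun L hL => R.departing_of_bounded hexp hL
  have hiff1 : R.Hyperbolic ↔
      ∃ L : ℕ, ∀ x y : X, R.dh x y = (R.G.dist x y : ℕ∞) → R.dh x y ≤ (L : ℕ∞) := by
    constructor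
    · exact R.bounded_of_hyperbolic
    · rintro ⟨L, hL⟩
      exact R.hyperbolic_of_bounded hexp hL
  refine ⟨hiff1, ?_, hpart3⟩
  constructor
  · intro hhyp
    obtain ⟨L, hL⟩ := hiff1.mp hhyp
    exact ⟨L + 1, L + 2, by omega, by omega, hpart3 L hL⟩
  · rintro ⟨m, k, hm, hk, hdep⟩
    obtain ⟨L, hL⟩ := R.bounded_of_departing hexp hm hk hdep
    exact hiff1.mpr ⟨L, hL⟩
end
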